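/- In the projective plane over a field, six distinct points lie on a conic if and only if for the hexagon they form, the three intersection points of pairs of opposite sides are collinear (Pascal's theorem and its converse). -/

import Mathlib

open Matrix QuadraticMap

section PascalAux
variable {R : Type*} [CommRing R]

private lemma sa4_0_0 : Fin.succAbove (0 : Fin 4) (0 : Fin 3) = 1 := rfl
private lemma sa4_0_1 : Fin.succAbove (0 : Fin 4) (1 : Fin 3) = 2 := rfl
private lemma sa4_0_2 : Fin.succAbove (0 : Fin 4) (2 : Fin 3) = 3 := rfl
private lemma sa4_1_0 : Fin.succAbove (1 : Fin 4) (0 : Fin 3) = 0 := rfl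
private lemma sa4_1_1 : Fin.succAbove (1 : Fin 4) (1 : Fin 3) = 2 := rfl
private lemma sa4_1_2 : Fin.succAbove (1 : Fin 4) (2 : Fin 3) = 3 := rfl
private lemma sa4_2_0 : Fin.succAbove (2 : Fin 4) (0 : Fin 3) = 0 := rfl
private lemma sa4_2_1 : Fin.succAbove (2 : Fin 4) (1 : Fin 3) = 1 := rfl
private lemma sa4_2_2 : Fin.succAbove (2 : Fin 4) (2 : Fin 3) = 3 := rfl
private lemma sa4_3_0 : Fin.succAbove (3 : Fin 4) (0 : Fin 3) = 0 := rfl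
private lemma sa4_3_1 : Fin.succAbove (3 : Fin 4) (1 : Fin 3) = 1 := rfl
private lemma sa4_3_2 : Fin.succAbove (3 : Fin 4) (2 : Fin 3) = 2 := rfl
private lemma sc4_0 : Fin.succ (0 : Fin 3) = (1 : Fin 4) := rfl
private lemma sc4_1 : Fin.succ (1 : Fin 3) = (2 : Fin 4) := rfl
private lemma sc4_2 : Fin.succ (2 : Fin 3) = (3 : Fin 4) := rfl
private lemma vv4_0 : (((0 : Fin 4) : ℕ)) = 0 := rfl
private lemma vv4_1 : (((1 : Fin 4) : ℕ)) = 1 := rfl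
private lemma vv4_2 : (((2 : Fin 4) : ℕ)) = 2 := rfl
private lemma vv4_3 : (((3 : Fin 4) : ℕ)) = 3 := rfl
private lemma sa5_0_0 : Fin.succAbove (0 : Fin 5) (0 : Fin 4) = 1 := rfl
private lemma sa5_0_1 : Fin.succAbove (0 : Fin 5) (1 : Fin 4) = 2 := rfl
private lemma sa5_0_2 : Fin.succAbove (0 : Fin 5) (2 : Fin 4) = 3 := rfl
private lemma sa5_0_3 : Fin.succAbove (0 : Fin 5) (3 : Fin 4) = 4 := rfl
private lemma sa5_1_0 : Fin.succAbove (1 : Fin 5) (0 : Fin 4) = 0 := rfl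
private lemma sa5_1_1 : Fin.succAbove (1 : Fin 5) (1 : Fin 4) = 2 := rfl
private lemma sa5_1_2 : Fin.succAbove (1 : Fin 5) (2 : Fin 4) = 3 := rfl
private lemma sa5_1_3 : Fin.succAbove (1 : Fin 5) (3 : Fin 4) = 4 := rfl
private lemma sa5_2_0 : Fin.succAbove (2 : Fin 5) (0 : Fin 4) = 0 := rfl
private lemma sa5_2_1 : Fin.succAbove (2 : Fin 5) (1 : Fin 4) = 1 := rfl
private lemma sa5_2_2 : Fin.succAbove (2 : Fin 5) (2 : Fin 4) = 3 := rfl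
private lemma sa5_2_3 : Fin.succAbove (2 : Fin 5) (3 : Fin 4) = 4 := rfl
private lemma sa5_3_0 : Fin.succAbove (3 : Fin 5) (0 : Fin 4) = 0 := rfl
private lemma sa5_3_1 : Fin.succAbove (3 : Fin 5) (1 : Fin 4) = 1 := rfl
private lemma sa5_3_2 : Fin.succAbove (3 : Fin 5) (2 : Fin 4) = 2 := rfl
private lemma sa5_3_3 : Fin.succAbove (3 : Fin 5) (3 : Fin 4) = 4 := rfl
private lemma sa5_4_0 : Fin.succAbove (4 : Fin 5) (0 : Fin 4) = 0 := rfl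
private lemma sa5_4_1 : Fin.succAbove (4 : Fin 5) (1 : Fin 4) = 1 := rfl
private lemma sa5_4_2 : Fin.succAbove (4 : Fin 5) (2 : Fin 4) = 2 := rfl
private lemma sa5_4_3 : Fin.succAbove (4 : Fin 5) (3 : Fin 4) = 3 := rfl
private lemma sc5_0 : Fin.succ (0 : Fin 4) = (1 : Fin 5) := rfl
private lemma sc5_1 : Fin.succ (1 : Fin 4) = (2 : Fin 5) := rfl
private lemma sc5_2 : Fin.succ (2 : Fin 4) = (3 : Fin 5) := rfl
private lemma sc5_3 : Fin.succ (3 : Fin 4) = (4 : Fin 5) := rfl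
private lemma vv5_0 : (((0 : Fin 5) : ℕ)) = 0 := rfl
private lemma vv5_1 : (((1 : Fin 5) : ℕ)) = 1 := rfl
private lemma vv5_2 : (((2 : Fin 5) : ℕ)) = 2 := rfl
private lemma vv5_3 : (((3 : Fin 5) : ℕ)) = 3 := rfl
private lemma vv5_4 : (((4 : Fin 5) : ℕ)) = 4 := rfl
private lemma sa6_0_0 : Fin.succAbove (0 : Fin 6) (0 : Fin 5) = 1 := rfl
private lemma sa6_0_1 : Fin.succAbove (0 : Fin 6) (1 : Fin 5) = 2 := rfl
private lemma sa6_0_2 : Fin.succAbove (0 : Fin 6) (2 : Fin 5) = 3 := rfl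
private lemma sa6_0_3 : Fin.succAbove (0 : Fin 6) (3 : Fin 5) = 4 := rfl
private lemma sa6_0_4 : Fin.succAbove (0 : Fin 6) (4 : Fin 5) = 5 := rfl
private lemma sa6_1_0 : Fin.succAbove (1 : Fin 6) (0 : Fin 5) = 0 := rfl
private lemma sa6_1_1 : Fin.succAbove (1 : Fin 6) (1 : Fin 5) = 2 := rfl
private lemma sa6_1_2 : Fin.succAbove (1 : Fin 6) (2 : Fin 5) = 3 := rfl
private lemma sa6_1_3 : Fin.succAbove (1 : Fin 6) (3 : Fin 5) = 4 := rfl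
private lemma sa6_1_4 : Fin.succAbove (1 : Fin 6) (4 : Fin 5) = 5 := rfl
private lemma sa6_2_0 : Fin.succAbove (2 : Fin 6) (0 : Fin 5) = 0 := rfl
private lemma sa6_2_1 : Fin.succAbove (2 : Fin 6) (1 : Fin 5) = 1 := rfl
private lemma sa6_2_2 : Fin.succAbove (2 : Fin 6) (2 : Fin 5) = 3 := rfl
private lemma sa6_2_3 : Fin.succAbove (2 : Fin 6) (3 : Fin 5) = 4 := rfl
private lemma sa6_2_4 : Fin.succAbove (2 : Fin 6) (4 : Fin 5) = 5 := rfl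
private lemma sa6_3_0 : Fin.succAbove (3 : Fin 6) (0 : Fin 5) = 0 := rfl
private lemma sa6_3_1 : Fin.succAbove (3 : Fin 6) (1 : Fin 5) = 1 := rfl
private lemma sa6_3_2 : Fin.succAbove (3 : Fin 6) (2 : Fin 5) = 2 := rfl
private lemma sa6_3_3 : Fin.succAbove (3 : Fin 6) (3 : Fin 5) = 4 := rfl
private lemma sa6_3_4 : Fin.succAbove (3 : Fin 6) (4 : Fin 5) = 5 := rfl
private lemma sa6_4_0 : Fin.succAbove (4 : Fin 6) (0 : Fin 5) = 0 := rfl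
private lemma sa6_4_1 : Fin.succAbove (4 : Fin 6) (1 : Fin 5) = 1 := rfl
private lemma sa6_4_2 : Fin.succAbove (4 : Fin 6) (2 : Fin 5) = 2 := rfl
private lemma sa6_4_3 : Fin.succAbove (4 : Fin 6) (3 : Fin 5) = 3 := rfl
private lemma sa6_4_4 : Fin.succAbove (4 : Fin 6) (4 : Fin 5) = 5 := rfl
private lemma sa6_5_0 : Fin.succAbove (5 : Fin 6) (0 : Fin 5) = 0 := rfl
private lemma sa6_5_1 : Fin.succAbove (5 : Fin 6) (1 : Fin 5) = 1 := rfl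
private lemma sa6_5_2 : Fin.succAbove (5 : Fin 6) (2 : Fin 5) = 2 := rfl
private lemma sa6_5_3 : Fin.succAbove (5 : Fin 6) (3 : Fin 5) = 3 := rfl
private lemma sa6_5_4 : Fin.succAbove (5 : Fin 6) (4 : Fin 5) = 4 := rfl
private lemma sc6_0 : Fin.succ (0 : Fin 5) = (1 : Fin 6) := rfl
private lemma sc6_1 : Fin.succ (1 : Fin 5) = (2 : Fin 6) := rfl
private lemma sc6_2 : Fin.succ (2 : Fin 5) = (3 : Fin 6) := rfl
private lemma sc6_3 : Fin.succ (3 : Fin 5) = (4 : Fin 6) := rfl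
private lemma sc6_4 : Fin.succ (4 : Fin 5) = (5 : Fin 6) := rfl
private lemma vv6_0 : (((0 : Fin 6) : ℕ)) = 0 := rfl
private lemma vv6_1 : (((1 : Fin 6) : ℕ)) = 1 := rfl
private lemma vv6_2 : (((2 : Fin 6) : ℕ)) = 2 := rfl
private lemma vv6_3 : (((3 : Fin 6) : ℕ)) = 3 := rfl
private lemma vv6_4 : (((4 : Fin 6) : ℕ)) = 4 := rfl
private lemma vv6_5 : (((5 : Fin 6) : ℕ)) = 5 := rfl

set_option maxHeartbeats 1600000 in
set_option maxRecDepth 100000 in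
set_option linter.unreachableTactic false in
set_option linter.unusedTactic false in
set_option linter.unnecessarySeqFocus false in
lemma my_det_fin_4 (A : Matrix (Fin 4) (Fin 4) R) :
    A.det = A 0 0 * A 1 1 * A 2 2 * A 3 3 - A 0 0 * A 1 1 * A 2 3 * A 3 2 - A 0 0 * A 1 2 * A 2 1 * A 3 3 + A 0 0 * A 1 2 * A 2 3 * A 3 1 + A 0 0 * A 1 3 * A 2 1 * A 3 2 - A 0 0 * A 1 3 * A 2 2 * A 3 1 - A 0 1 * A 1 0 * A 2 2 * A 3 3 + A 0 1 * A 1 0 * A 2 3 * A 3 2 + A 0 1 * A 1 2 * A 2 0 * A 3 3 - A 0 1 * A 1 2 * A 2 3 * A 3 0 - A 0 1 * A 1 3 * A 2 0 * A 3 2 + A 0 1 * A 1 3 * A 2 2 * A 3 0 + A 0 2 * A 1 0 * A 2 1 * A 3 3 - A 0 2 * A 1 0 * A 2 3 * A 3 1 - A 0 2 * A 1 1 * A 2 0 * A 3 3 + A 0 2 * A 1 1 * A 2 3 * A 3 0 + A 0 2 * A 1 3 * A 2 0 * A 3 1 - A 0 2 * A 1 3 * A 2 1 * A 3 0 - A 0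 3 * A 1 0 * A 2 1 * A 3 2 + A 0 3 * A 1 0 * A 2 2 * A 3 1 + A 0 3 * A 1 1 * A 2 0 * A 3 2 - A 0 3 * A 1 1 * A 2 2 * A 3 0 - A 0 3 * A 1 2 * A 2 0 * A 3 1 + A 0 3 * A 1 2 * A 2 1 * A 3 0 := by
  rw [det_succ_row_zero]
  simp only [Fin.sum_univ_four]
  rw [det_fin_three, det_fin_three, det_fin_three, det_fin_three]
  simp only [submatrix_apply, sa4_0_0, sa4_0_1, sa4_0_2, sa4_1_0, sa4_1_1, sa4_1_2, sa4_2_0, sa4_2_1, sa4_2_2, sa4_3_0, sa4_3_1, sa4_3_2,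
    sc4_0, sc4_1, sc4_2, vv4_0, vv4_1, vv4_2, vv4_3]
  ring

set_option maxHeartbeats 1600000 in
set_option maxRecDepth 100000 in
set_option linter.unreachableTactic false in
set_option linter.unusedTactic false in
set_option linter.unnecessarySeqFocus false in
lemma my_det_fin_5 (A : Matrix (Fin 5) (Fin 5) R) :
    A.det = A 0 0 * A 1 1 * A 2 2 * A 3 3 * A 4 4 - A 0 0 * A 1 1 * A 2 2 * A 3 4 * A 4 3 - A 0 0 * A 1 1 * A 2 3 * A 3 2 * A 4 4 + A 0 0 * A 1 1 * A 2 3 * A 3 4 * A 4 2 + A 0 0 * A 1 1 * A 2 4 * A 3 2 * A 4 3 - A 0 0 * A 1 1 * A 2 4 * A 3 3 * A 4 2 - A 0 0 * A 1 2 * A 2 1 * A 3 3 * A 4 4 + A 0 0 * A 1 2 * A 2 1 * A 3 4 * A 4 3 + A 0 0 * A 1 2 * A 2 3 * A 3 1 * A 4 4 - A 0 0 * A 1 2 * A 2 3 * A 3 4 * A 4 1 - A 0 0 * A 1 2 * A 2 4 * A 3 1 * A 4 3 + A 0 0 * A 1 2 * A 2 4 * A 3 3 * A 4 1 + A 0 0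 * A 1 3 * A 2 1 * A 3 2 * A 4 4 - A 0 0 * A 1 3 * A 2 1 * A 3 4 * A 4 2 - A 0 0 * A 1 3 * A 2 2 * A 3 1 * A 4 4 + A 0 0 * A 1 3 * A 2 2 * A 3 4 * A 4 1 + A 0 0 * A 1 3 * A 2 4 * A 3 1 * A 4 2 - A 0 0 * A 1 3 * A 2 4 * A 3 2 * A 4 1 - A 0 0 * A 1 4 * A 2 1 * A 3 2 * A 4 3 + A 0 0 * A 1 4 * A 2 1 * A 3 3 * A 4 2 + A 0 0 * A 1 4 * A 2 2 * A 3 1 * A 4 3 - A 0 0 * A 1 4 * A 2 2 * A 3 3 * A 4 1 - A 0 0 * A 1 4 * A 2 3 * A 3 1 * A 4 2 + A 0 0 * A 1 4 * A 2 3 * A 3 2 * A 4 1 - A 0 1 * A 1 0 * A 2 2 * A 3 3 * A 4 4 + A 0 1 * A 1 0 * A 2 2 * A 3 4 * A 4 3 + A 0 1 * A 1 0 * A 2 3 * A 3 2 * A 4 4 - A 0 1 * A 1 0 * A 2 3 * A 3 4 * A 4 2 - A 0 1 * A 1 0 * A 2 4 * A 3 2 * A 4 3 + A 0 1 * A 1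 0 * A 2 4 * A 3 3 * A 4 2 + A 0 1 * A 1 2 * A 2 0 * A 3 3 * A 4 4 - A 0 1 * A 1 2 * A 2 0 * A 3 4 * A 4 3 - A 0 1 * A 1 2 * A 2 3 * A 3 0 * A 4 4 + A 0 1 * A 1 2 * A 2 3 * A 3 4 * A 4 0 + A 0 1 * A 1 2 * A 2 4 * A 3 0 * A 4 3 - A 0 1 * A 1 2 * A 2 4 * A 3 3 * A 4 0 - A 0 1 * A 1 3 * A 2 0 * A 3 2 * A 4 4 + A 0 1 * A 1 3 * A 2 0 * A 3 4 * A 4 2 + A 0 1 * A 1 3 * A 2 2 * A 3 0 * A 4 4 - A 0 1 * A 1 3 * A 2 2 * A 3 4 * A 4 0 - A 0 1 * A 1 3 * A 2 4 * A 3 0 * A 4 2 + A 0 1 * A 1 3 * A 2 4 * A 3 2 * A 4 0 + A 0 1 * A 1 4 * A 2 0 * A 3 2 * A 4 3 - A 0 1 * A 1 4 * A 2 0 * A 3 3 * A 4 2 - A 0 1 * A 1 4 * A 2 2 * A 3 0 * A 4 3 + A 0 1 * A 1 4 * A 2 2 * A 3 3 * A 4 0 + A 0 1 * A 1 4 * A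 2 3 * A 3 0 * A 4 2 - A 0 1 * A 1 4 * A 2 3 * A 3 2 * A 4 0 + A 0 2 * A 1 0 * A 2 1 * A 3 3 * A 4 4 - A 0 2 * A 1 0 * A 2 1 * A 3 4 * A 4 3 - A 0 2 * A 1 0 * A 2 3 * A 3 1 * A 4 4 + A 0 2 * A 1 0 * A 2 3 * A 3 4 * A 4 1 + A 0 2 * A 1 0 * A 2 4 * A 3 1 * A 4 3 - A 0 2 * A 1 0 * A 2 4 * A 3 3 * A 4 1 - A 0 2 * A 1 1 * A 2 0 * A 3 3 * A 4 4 + A 0 2 * A 1 1 * A 2 0 * A 3 4 * A 4 3 + A 0 2 * A 1 1 * A 2 3 * A 3 0 * A 4 4 - A 0 2 * A 1 1 * A 2 3 * A 3 4 * A 4 0 - A 0 2 * A 1 1 * A 2 4 * A 3 0 * A 4 3 + A 0 2 * A 1 1 * A 2 4 * A 3 3 * A 4 0 + A 0 2 * A 1 3 * A 2 0 * A 3 1 * A 4 4 - A 0 2 * A 1 3 * A 2 0 * A 3 4 * A 4 1 - A 0 2 * A 1 3 * A 2 1 * A 3 0 * A 4 4 + A 0 2 * A 1 3 * A 2 1 *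 A 3 4 * A 4 0 + A 0 2 * A 1 3 * A 2 4 * A 3 0 * A 4 1 - A 0 2 * A 1 3 * A 2 4 * A 3 1 * A 4 0 - A 0 2 * A 1 4 * A 2 0 * A 3 1 * A 4 3 + A 0 2 * A 1 4 * A 2 0 * A 3 3 * A 4 1 + A 0 2 * A 1 4 * A 2 1 * A 3 0 * A 4 3 - A 0 2 * A 1 4 * A 2 1 * A 3 3 * A 4 0 - A 0 2 * A 1 4 * A 2 3 * A 3 0 * A 4 1 + A 0 2 * A 1 4 * A 2 3 * A 3 1 * A 4 0 - A 0 3 * A 1 0 * A 2 1 * A 3 2 * A 4 4 + A 0 3 * A 1 0 * A 2 1 * A 3 4 * A 4 2 + A 0 3 * A 1 0 * A 2 2 * A 3 1 * A 4 4 - A 0 3 * A 1 0 * A 2 2 * A 3 4 * A 4 1 - A 0 3 * A 1 0 * A 2 4 * A 3 1 * A 4 2 + A 0 3 * A 1 0 * A 2 4 * A 3 2 * A 4 1 + A 0 3 * A 1 1 * A 2 0 * A 3 2 * A 4 4 - A 0 3 * A 1 1 * A 2 0 * A 3 4 * A 4 2 - A 0 3 * A 1 1 * A 2 2 * A 3 0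 * A 4 4 + A 0 3 * A 1 1 * A 2 2 * A 3 4 * A 4 0 + A 0 3 * A 1 1 * A 2 4 * A 3 0 * A 4 2 - A 0 3 * A 1 1 * A 2 4 * A 3 2 * A 4 0 - A 0 3 * A 1 2 * A 2 0 * A 3 1 * A 4 4 + A 0 3 * A 1 2 * A 2 0 * A 3 4 * A 4 1 + A 0 3 * A 1 2 * A 2 1 * A 3 0 * A 4 4 - A 0 3 * A 1 2 * A 2 1 * A 3 4 * A 4 0 - A 0 3 * A 1 2 * A 2 4 * A 3 0 * A 4 1 + A 0 3 * A 1 2 * A 2 4 * A 3 1 * A 4 0 + A 0 3 * A 1 4 * A 2 0 * A 3 1 * A 4 2 - A 0 3 * A 1 4 * A 2 0 * A 3 2 * A 4 1 - A 0 3 * A 1 4 * A 2 1 * A 3 0 * A 4 2 + A 0 3 * A 1 4 * A 2 1 * A 3 2 * A 4 0 + A 0 3 * A 1 4 * A 2 2 * A 3 0 * A 4 1 - A 0 3 * A 1 4 * A 2 2 * A 3 1 * A 4 0 + A 0 4 * A 1 0 * A 2 1 * A 3 2 * A 4 3 - A 0 4 * A 1 0 * A 2 1 * A 3 3 * A 4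 2 - A 0 4 * A 1 0 * A 2 2 * A 3 1 * A 4 3 + A 0 4 * A 1 0 * A 2 2 * A 3 3 * A 4 1 + A 0 4 * A 1 0 * A 2 3 * A 3 1 * A 4 2 - A 0 4 * A 1 0 * A 2 3 * A 3 2 * A 4 1 - A 0 4 * A 1 1 * A 2 0 * A 3 2 * A 4 3 + A 0 4 * A 1 1 * A 2 0 * A 3 3 * A 4 2 + A 0 4 * A 1 1 * A 2 2 * A 3 0 * A 4 3 - A 0 4 * A 1 1 * A 2 2 * A 3 3 * A 4 0 - A 0 4 * A 1 1 * A 2 3 * A 3 0 * A 4 2 + A 0 4 * A 1 1 * A 2 3 * A 3 2 * A 4 0 + A 0 4 * A 1 2 * A 2 0 * A 3 1 * A 4 3 - A 0 4 * A 1 2 * A 2 0 * A 3 3 * A 4 1 - A 0 4 * A 1 2 * A 2 1 * A 3 0 * A 4 3 + A 0 4 * A 1 2 * A 2 1 * A 3 3 * A 4 0 + A 0 4 * A 1 2 * A 2 3 * A 3 0 * A 4 1 - A 0 4 * A 1 2 * A 2 3 * A 3 1 * A 4 0 - A 0 4 * A 1 3 * A 2 0 * A 3 1 * A 4 2 + A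 0 4 * A 1 3 * A 2 0 * A 3 2 * A 4 1 + A 0 4 * A 1 3 * A 2 1 * A 3 0 * A 4 2 - A 0 4 * A 1 3 * A 2 1 * A 3 2 * A 4 0 - A 0 4 * A 1 3 * A 2 2 * A 3 0 * A 4 1 + A 0 4 * A 1 3 * A 2 2 * A 3 1 * A 4 0 := by
  rw [det_succ_row_zero]
  simp only [Fin.sum_univ_five]
  rw [my_det_fin_4, my_det_fin_4, my_det_fin_4, my_det_fin_4, my_det_fin_4]
  simp only [submatrix_apply, sa5_0_0, sa5_0_1, sa5_0_2, sa5_0_3, sa5_1_0, sa5_1_1, sa5_1_2, sa5_1_3, sa5_2_0, sa5_2_1, sa5_2_2, sa5_2_3, sa5_3_0, sa5_3_1, sa5_3_2, sa5_3_3, sa5_4_0, sa5_4_1, sa5_4_2, sa5_4_3,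
    sc5_0, sc5_1, sc5_2, sc5_3, vv5_0, vv5_1, vv5_2, vv5_3, vv5_4]
  ring

set_option maxHeartbeats 1600000 in
set_option maxRecDepth 100000 in
set_option linter.unreachableTactic false in
set_option linter.unusedTactic false in
set_option linter.unnecessarySeqFocus false in
lemma my_det_fin_6 (A : Matrix (Fin 6) (Fin 6) R) :
    A.det = A 0 0 * A 1 1 * A 2 2 * A 3 3 * A 4 4 * A 5 5 - A 0 0 * A 1 1 * A 2 2 * A 3 3 * A 4 5 * A 5 4 - A 0 0 * A 1 1 * A 2 2 * A 3 4 * A 4 3 * A 5 5 + A 0 0 * A 1 1 * A 2 2 * A 3 4 * A 4 5 * A 5 3 + A 0 0 * A 1 1 * A 2 2 * A 3 5 * A 4 3 * A 5 4 - A 0 0 * A 1 1 * A 2 2 * A 3 5 * A 4 4 * A 5 3 - A 0 0 * A 1 1 * A 2 3 * A 3 2 * A 4 4 * A 5 5 + A 0 0 * A 1 1 * A 2 3 * A 3 2 * A 4 5 * A 5 4 + A 0 0 * A 1 1 * A 2 3 * A 3 4 * A 4 2 * A 5 5 - A 0 0 * A 1 1 * A 2 3 * A 3 4 * A 4 5 *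 A 5 2 - A 0 0 * A 1 1 * A 2 3 * A 3 5 * A 4 2 * A 5 4 + A 0 0 * A 1 1 * A 2 3 * A 3 5 * A 4 4 * A 5 2 + A 0 0 * A 1 1 * A 2 4 * A 3 2 * A 4 3 * A 5 5 - A 0 0 * A 1 1 * A 2 4 * A 3 2 * A 4 5 * A 5 3 - A 0 0 * A 1 1 * A 2 4 * A 3 3 * A 4 2 * A 5 5 + A 0 0 * A 1 1 * A 2 4 * A 3 3 * A 4 5 * A 5 2 + A 0 0 * A 1 1 * A 2 4 * A 3 5 * A 4 2 * A 5 3 - A 0 0 * A 1 1 * A 2 4 * A 3 5 * A 4 3 * A 5 2 - A 0 0 * A 1 1 * A 2 5 * A 3 2 * A 4 3 * A 5 4 + A 0 0 * A 1 1 * A 2 5 * A 3 2 * A 4 4 * A 5 3 + A 0 0 * A 1 1 * A 2 5 * A 3 3 * A 4 2 * A 5 4 - A 0 0 * A 1 1 * A 2 5 * A 3 3 * A 4 4 * A 5 2 - A 0 0 * A 1 1 * A 2 5 * A 3 4 * A 4 2 * A 5 3 + A 0 0 * A 1 1 * A 2 5 * A 3 4 * A 4 3 * A 5 2 - A 0 0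 * A 1 2 * A 2 1 * A 3 3 * A 4 4 * A 5 5 + A 0 0 * A 1 2 * A 2 1 * A 3 3 * A 4 5 * A 5 4 + A 0 0 * A 1 2 * A 2 1 * A 3 4 * A 4 3 * A 5 5 - A 0 0 * A 1 2 * A 2 1 * A 3 4 * A 4 5 * A 5 3 - A 0 0 * A 1 2 * A 2 1 * A 3 5 * A 4 3 * A 5 4 + A 0 0 * A 1 2 * A 2 1 * A 3 5 * A 4 4 * A 5 3 + A 0 0 * A 1 2 * A 2 3 * A 3 1 * A 4 4 * A 5 5 - A 0 0 * A 1 2 * A 2 3 * A 3 1 * A 4 5 * A 5 4 - A 0 0 * A 1 2 * A 2 3 * A 3 4 * A 4 1 * A 5 5 + A 0 0 * A 1 2 * A 2 3 * A 3 4 * A 4 5 * A 5 1 + A 0 0 * A 1 2 * A 2 3 * A 3 5 * A 4 1 * A 5 4 - A 0 0 * A 1 2 * A 2 3 * A 3 5 * A 4 4 * A 5 1 - A 0 0 * A 1 2 * A 2 4 * A 3 1 * A 4 3 * A 5 5 + A 0 0 * A 1 2 * A 2 4 * A 3 1 * A 4 5 * A 5 3 + A 0 0 * A 1 2 * A 2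 4 * A 3 3 * A 4 1 * A 5 5 - A 0 0 * A 1 2 * A 2 4 * A 3 3 * A 4 5 * A 5 1 - A 0 0 * A 1 2 * A 2 4 * A 3 5 * A 4 1 * A 5 3 + A 0 0 * A 1 2 * A 2 4 * A 3 5 * A 4 3 * A 5 1 + A 0 0 * A 1 2 * A 2 5 * A 3 1 * A 4 3 * A 5 4 - A 0 0 * A 1 2 * A 2 5 * A 3 1 * A 4 4 * A 5 3 - A 0 0 * A 1 2 * A 2 5 * A 3 3 * A 4 1 * A 5 4 + A 0 0 * A 1 2 * A 2 5 * A 3 3 * A 4 4 * A 5 1 + A 0 0 * A 1 2 * A 2 5 * A 3 4 * A 4 1 * A 5 3 - A 0 0 * A 1 2 * A 2 5 * A 3 4 * A 4 3 * A 5 1 + A 0 0 * A 1 3 * A 2 1 * A 3 2 * A 4 4 * A 5 5 - A 0 0 * A 1 3 * A 2 1 * A 3 2 * A 4 5 * A 5 4 - A 0 0 * A 1 3 * A 2 1 * A 3 4 * A 4 2 * A 5 5 + A 0 0 * A 1 3 * A 2 1 * A 3 4 * A 4 5 * A 5 2 + A 0 0 * A 1 3 * A 2 1 * A 3 5 * A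 4 2 * A 5 4 - A 0 0 * A 1 3 * A 2 1 * A 3 5 * A 4 4 * A 5 2 - A 0 0 * A 1 3 * A 2 2 * A 3 1 * A 4 4 * A 5 5 + A 0 0 * A 1 3 * A 2 2 * A 3 1 * A 4 5 * A 5 4 + A 0 0 * A 1 3 * A 2 2 * A 3 4 * A 4 1 * A 5 5 - A 0 0 * A 1 3 * A 2 2 * A 3 4 * A 4 5 * A 5 1 - A 0 0 * A 1 3 * A 2 2 * A 3 5 * A 4 1 * A 5 4 + A 0 0 * A 1 3 * A 2 2 * A 3 5 * A 4 4 * A 5 1 + A 0 0 * A 1 3 * A 2 4 * A 3 1 * A 4 2 * A 5 5 - A 0 0 * A 1 3 * A 2 4 * A 3 1 * A 4 5 * A 5 2 - A 0 0 * A 1 3 * A 2 4 * A 3 2 * A 4 1 * A 5 5 + A 0 0 * A 1 3 * A 2 4 * A 3 2 * A 4 5 * A 5 1 + A 0 0 * A 1 3 * A 2 4 * A 3 5 * A 4 1 * A 5 2 - A 0 0 * A 1 3 * A 2 4 * A 3 5 * A 4 2 * A 5 1 - A 0 0 * A 1 3 * A 2 5 * A 3 1 * A 4 2 * A 5 4 +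 A 0 0 * A 1 3 * A 2 5 * A 3 1 * A 4 4 * A 5 2 + A 0 0 * A 1 3 * A 2 5 * A 3 2 * A 4 1 * A 5 4 - A 0 0 * A 1 3 * A 2 5 * A 3 2 * A 4 4 * A 5 1 - A 0 0 * A 1 3 * A 2 5 * A 3 4 * A 4 1 * A 5 2 + A 0 0 * A 1 3 * A 2 5 * A 3 4 * A 4 2 * A 5 1 - A 0 0 * A 1 4 * A 2 1 * A 3 2 * A 4 3 * A 5 5 + A 0 0 * A 1 4 * A 2 1 * A 3 2 * A 4 5 * A 5 3 + A 0 0 * A 1 4 * A 2 1 * A 3 3 * A 4 2 * A 5 5 - A 0 0 * A 1 4 * A 2 1 * A 3 3 * A 4 5 * A 5 2 - A 0 0 * A 1 4 * A 2 1 * A 3 5 * A 4 2 * A 5 3 + A 0 0 * A 1 4 * A 2 1 * A 3 5 * A 4 3 * A 5 2 + A 0 0 * A 1 4 * A 2 2 * A 3 1 * A 4 3 * A 5 5 - A 0 0 * A 1 4 * A 2 2 * A 3 1 * A 4 5 * A 5 3 - A 0 0 * A 1 4 * A 2 2 * A 3 3 * A 4 1 * A 5 5 + A 0 0 * A 1 4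 * A 2 2 * A 3 3 * A 4 5 * A 5 1 + A 0 0 * A 1 4 * A 2 2 * A 3 5 * A 4 1 * A 5 3 - A 0 0 * A 1 4 * A 2 2 * A 3 5 * A 4 3 * A 5 1 - A 0 0 * A 1 4 * A 2 3 * A 3 1 * A 4 2 * A 5 5 + A 0 0 * A 1 4 * A 2 3 * A 3 1 * A 4 5 * A 5 2 + A 0 0 * A 1 4 * A 2 3 * A 3 2 * A 4 1 * A 5 5 - A 0 0 * A 1 4 * A 2 3 * A 3 2 * A 4 5 * A 5 1 - A 0 0 * A 1 4 * A 2 3 * A 3 5 * A 4 1 * A 5 2 + A 0 0 * A 1 4 * A 2 3 * A 3 5 * A 4 2 * A 5 1 + A 0 0 * A 1 4 * A 2 5 * A 3 1 * A 4 2 * A 5 3 - A 0 0 * A 1 4 * A 2 5 * A 3 1 * A 4 3 * A 5 2 - A 0 0 * A 1 4 * A 2 5 * A 3 2 * A 4 1 * A 5 3 + A 0 0 * A 1 4 * A 2 5 * A 3 2 * A 4 3 * A 5 1 + A 0 0 * A 1 4 * A 2 5 * A 3 3 * A 4 1 * A 5 2 - A 0 0 * A 1 4 * A 2 5 * A 3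 3 * A 4 2 * A 5 1 + A 0 0 * A 1 5 * A 2 1 * A 3 2 * A 4 3 * A 5 4 - A 0 0 * A 1 5 * A 2 1 * A 3 2 * A 4 4 * A 5 3 - A 0 0 * A 1 5 * A 2 1 * A 3 3 * A 4 2 * A 5 4 + A 0 0 * A 1 5 * A 2 1 * A 3 3 * A 4 4 * A 5 2 + A 0 0 * A 1 5 * A 2 1 * A 3 4 * A 4 2 * A 5 3 - A 0 0 * A 1 5 * A 2 1 * A 3 4 * A 4 3 * A 5 2 - A 0 0 * A 1 5 * A 2 2 * A 3 1 * A 4 3 * A 5 4 + A 0 0 * A 1 5 * A 2 2 * A 3 1 * A 4 4 * A 5 3 + A 0 0 * A 1 5 * A 2 2 * A 3 3 * A 4 1 * A 5 4 - A 0 0 * A 1 5 * A 2 2 * A 3 3 * A 4 4 * A 5 1 - A 0 0 * A 1 5 * A 2 2 * A 3 4 * A 4 1 * A 5 3 + A 0 0 * A 1 5 * A 2 2 * A 3 4 * A 4 3 * A 5 1 + A 0 0 * A 1 5 * A 2 3 * A 3 1 * A 4 2 * A 5 4 - A 0 0 * A 1 5 * A 2 3 * A 3 1 * A 4 4 * A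 5 2 - A 0 0 * A 1 5 * A 2 3 * A 3 2 * A 4 1 * A 5 4 + A 0 0 * A 1 5 * A 2 3 * A 3 2 * A 4 4 * A 5 1 + A 0 0 * A 1 5 * A 2 3 * A 3 4 * A 4 1 * A 5 2 - A 0 0 * A 1 5 * A 2 3 * A 3 4 * A 4 2 * A 5 1 - A 0 0 * A 1 5 * A 2 4 * A 3 1 * A 4 2 * A 5 3 + A 0 0 * A 1 5 * A 2 4 * A 3 1 * A 4 3 * A 5 2 + A 0 0 * A 1 5 * A 2 4 * A 3 2 * A 4 1 * A 5 3 - A 0 0 * A 1 5 * A 2 4 * A 3 2 * A 4 3 * A 5 1 - A 0 0 * A 1 5 * A 2 4 * A 3 3 * A 4 1 * A 5 2 + A 0 0 * A 1 5 * A 2 4 * A 3 3 * A 4 2 * A 5 1 - A 0 1 * A 1 0 * A 2 2 * A 3 3 * A 4 4 * A 5 5 + A 0 1 * A 1 0 * A 2 2 * A 3 3 * A 4 5 * A 5 4 + A 0 1 * A 1 0 * A 2 2 * A 3 4 * A 4 3 * A 5 5 - A 0 1 * A 1 0 * A 2 2 * A 3 4 * A 4 5 * A 5 3 - A 0 1 *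 A 1 0 * A 2 2 * A 3 5 * A 4 3 * A 5 4 + A 0 1 * A 1 0 * A 2 2 * A 3 5 * A 4 4 * A 5 3 + A 0 1 * A 1 0 * A 2 3 * A 3 2 * A 4 4 * A 5 5 - A 0 1 * A 1 0 * A 2 3 * A 3 2 * A 4 5 * A 5 4 - A 0 1 * A 1 0 * A 2 3 * A 3 4 * A 4 2 * A 5 5 + A 0 1 * A 1 0 * A 2 3 * A 3 4 * A 4 5 * A 5 2 + A 0 1 * A 1 0 * A 2 3 * A 3 5 * A 4 2 * A 5 4 - A 0 1 * A 1 0 * A 2 3 * A 3 5 * A 4 4 * A 5 2 - A 0 1 * A 1 0 * A 2 4 * A 3 2 * A 4 3 * A 5 5 + A 0 1 * A 1 0 * A 2 4 * A 3 2 * A 4 5 * A 5 3 + A 0 1 * A 1 0 * A 2 4 * A 3 3 * A 4 2 * A 5 5 - A 0 1 * A 1 0 * A 2 4 * A 3 3 * A 4 5 * A 5 2 - A 0 1 * A 1 0 * A 2 4 * A 3 5 * A 4 2 * A 5 3 + A 0 1 * A 1 0 * A 2 4 * A 3 5 * A 4 3 * A 5 2 + A 0 1 * A 1 0 * A 2 5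 * A 3 2 * A 4 3 * A 5 4 - A 0 1 * A 1 0 * A 2 5 * A 3 2 * A 4 4 * A 5 3 - A 0 1 * A 1 0 * A 2 5 * A 3 3 * A 4 2 * A 5 4 + A 0 1 * A 1 0 * A 2 5 * A 3 3 * A 4 4 * A 5 2 + A 0 1 * A 1 0 * A 2 5 * A 3 4 * A 4 2 * A 5 3 - A 0 1 * A 1 0 * A 2 5 * A 3 4 * A 4 3 * A 5 2 + A 0 1 * A 1 2 * A 2 0 * A 3 3 * A 4 4 * A 5 5 - A 0 1 * A 1 2 * A 2 0 * A 3 3 * A 4 5 * A 5 4 - A 0 1 * A 1 2 * A 2 0 * A 3 4 * A 4 3 * A 5 5 + A 0 1 * A 1 2 * A 2 0 * A 3 4 * A 4 5 * A 5 3 + A 0 1 * A 1 2 * A 2 0 * A 3 5 * A 4 3 * A 5 4 - A 0 1 * A 1 2 * A 2 0 * A 3 5 * A 4 4 * A 5 3 - A 0 1 * A 1 2 * A 2 3 * A 3 0 * A 4 4 * A 5 5 + A 0 1 * A 1 2 * A 2 3 * A 3 0 * A 4 5 * A 5 4 + A 0 1 * A 1 2 * A 2 3 * A 3 4 * A 4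 0 * A 5 5 - A 0 1 * A 1 2 * A 2 3 * A 3 4 * A 4 5 * A 5 0 - A 0 1 * A 1 2 * A 2 3 * A 3 5 * A 4 0 * A 5 4 + A 0 1 * A 1 2 * A 2 3 * A 3 5 * A 4 4 * A 5 0 + A 0 1 * A 1 2 * A 2 4 * A 3 0 * A 4 3 * A 5 5 - A 0 1 * A 1 2 * A 2 4 * A 3 0 * A 4 5 * A 5 3 - A 0 1 * A 1 2 * A 2 4 * A 3 3 * A 4 0 * A 5 5 + A 0 1 * A 1 2 * A 2 4 * A 3 3 * A 4 5 * A 5 0 + A 0 1 * A 1 2 * A 2 4 * A 3 5 * A 4 0 * A 5 3 - A 0 1 * A 1 2 * A 2 4 * A 3 5 * A 4 3 * A 5 0 - A 0 1 * A 1 2 * A 2 5 * A 3 0 * A 4 3 * A 5 4 + A 0 1 * A 1 2 * A 2 5 * A 3 0 * A 4 4 * A 5 3 + A 0 1 * A 1 2 * A 2 5 * A 3 3 * A 4 0 * A 5 4 - A 0 1 * A 1 2 * A 2 5 * A 3 3 * A 4 4 * A 5 0 - A 0 1 * A 1 2 * A 2 5 * A 3 4 * A 4 0 * A 5 3 + A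 0 1 * A 1 2 * A 2 5 * A 3 4 * A 4 3 * A 5 0 - A 0 1 * A 1 3 * A 2 0 * A 3 2 * A 4 4 * A 5 5 + A 0 1 * A 1 3 * A 2 0 * A 3 2 * A 4 5 * A 5 4 + A 0 1 * A 1 3 * A 2 0 * A 3 4 * A 4 2 * A 5 5 - A 0 1 * A 1 3 * A 2 0 * A 3 4 * A 4 5 * A 5 2 - A 0 1 * A 1 3 * A 2 0 * A 3 5 * A 4 2 * A 5 4 + A 0 1 * A 1 3 * A 2 0 * A 3 5 * A 4 4 * A 5 2 + A 0 1 * A 1 3 * A 2 2 * A 3 0 * A 4 4 * A 5 5 - A 0 1 * A 1 3 * A 2 2 * A 3 0 * A 4 5 * A 5 4 - A 0 1 * A 1 3 * A 2 2 * A 3 4 * A 4 0 * A 5 5 + A 0 1 * A 1 3 * A 2 2 * A 3 4 * A 4 5 * A 5 0 + A 0 1 * A 1 3 * A 2 2 * A 3 5 * A 4 0 * A 5 4 - A 0 1 * A 1 3 * A 2 2 * A 3 5 * A 4 4 * A 5 0 - A 0 1 * A 1 3 * A 2 4 * A 3 0 * A 4 2 * A 5 5 + A 0 1 * A 1 3 *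 A 2 4 * A 3 0 * A 4 5 * A 5 2 + A 0 1 * A 1 3 * A 2 4 * A 3 2 * A 4 0 * A 5 5 - A 0 1 * A 1 3 * A 2 4 * A 3 2 * A 4 5 * A 5 0 - A 0 1 * A 1 3 * A 2 4 * A 3 5 * A 4 0 * A 5 2 + A 0 1 * A 1 3 * A 2 4 * A 3 5 * A 4 2 * A 5 0 + A 0 1 * A 1 3 * A 2 5 * A 3 0 * A 4 2 * A 5 4 - A 0 1 * A 1 3 * A 2 5 * A 3 0 * A 4 4 * A 5 2 - A 0 1 * A 1 3 * A 2 5 * A 3 2 * A 4 0 * A 5 4 + A 0 1 * A 1 3 * A 2 5 * A 3 2 * A 4 4 * A 5 0 + A 0 1 * A 1 3 * A 2 5 * A 3 4 * A 4 0 * A 5 2 - A 0 1 * A 1 3 * A 2 5 * A 3 4 * A 4 2 * A 5 0 + A 0 1 * A 1 4 * A 2 0 * A 3 2 * A 4 3 * A 5 5 - A 0 1 * A 1 4 * A 2 0 * A 3 2 * A 4 5 * A 5 3 - A 0 1 * A 1 4 * A 2 0 * A 3 3 * A 4 2 * A 5 5 + A 0 1 * A 1 4 * A 2 0 * A 3 3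 * A 4 5 * A 5 2 + A 0 1 * A 1 4 * A 2 0 * A 3 5 * A 4 2 * A 5 3 - A 0 1 * A 1 4 * A 2 0 * A 3 5 * A 4 3 * A 5 2 - A 0 1 * A 1 4 * A 2 2 * A 3 0 * A 4 3 * A 5 5 + A 0 1 * A 1 4 * A 2 2 * A 3 0 * A 4 5 * A 5 3 + A 0 1 * A 1 4 * A 2 2 * A 3 3 * A 4 0 * A 5 5 - A 0 1 * A 1 4 * A 2 2 * A 3 3 * A 4 5 * A 5 0 - A 0 1 * A 1 4 * A 2 2 * A 3 5 * A 4 0 * A 5 3 + A 0 1 * A 1 4 * A 2 2 * A 3 5 * A 4 3 * A 5 0 + A 0 1 * A 1 4 * A 2 3 * A 3 0 * A 4 2 * A 5 5 - A 0 1 * A 1 4 * A 2 3 * A 3 0 * A 4 5 * A 5 2 - A 0 1 * A 1 4 * A 2 3 * A 3 2 * A 4 0 * A 5 5 + A 0 1 * A 1 4 * A 2 3 * A 3 2 * A 4 5 * A 5 0 + A 0 1 * A 1 4 * A 2 3 * A 3 5 * A 4 0 * A 5 2 - A 0 1 * A 1 4 * A 2 3 * A 3 5 * A 4 2 * A 5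 0 - A 0 1 * A 1 4 * A 2 5 * A 3 0 * A 4 2 * A 5 3 + A 0 1 * A 1 4 * A 2 5 * A 3 0 * A 4 3 * A 5 2 + A 0 1 * A 1 4 * A 2 5 * A 3 2 * A 4 0 * A 5 3 - A 0 1 * A 1 4 * A 2 5 * A 3 2 * A 4 3 * A 5 0 - A 0 1 * A 1 4 * A 2 5 * A 3 3 * A 4 0 * A 5 2 + A 0 1 * A 1 4 * A 2 5 * A 3 3 * A 4 2 * A 5 0 - A 0 1 * A 1 5 * A 2 0 * A 3 2 * A 4 3 * A 5 4 + A 0 1 * A 1 5 * A 2 0 * A 3 2 * A 4 4 * A 5 3 + A 0 1 * A 1 5 * A 2 0 * A 3 3 * A 4 2 * A 5 4 - A 0 1 * A 1 5 * A 2 0 * A 3 3 * A 4 4 * A 5 2 - A 0 1 * A 1 5 * A 2 0 * A 3 4 * A 4 2 * A 5 3 + A 0 1 * A 1 5 * A 2 0 * A 3 4 * A 4 3 * A 5 2 + A 0 1 * A 1 5 * A 2 2 * A 3 0 * A 4 3 * A 5 4 - A 0 1 * A 1 5 * A 2 2 * A 3 0 * A 4 4 * A 5 3 - A 0 1 * A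 1 5 * A 2 2 * A 3 3 * A 4 0 * A 5 4 + A 0 1 * A 1 5 * A 2 2 * A 3 3 * A 4 4 * A 5 0 + A 0 1 * A 1 5 * A 2 2 * A 3 4 * A 4 0 * A 5 3 - A 0 1 * A 1 5 * A 2 2 * A 3 4 * A 4 3 * A 5 0 - A 0 1 * A 1 5 * A 2 3 * A 3 0 * A 4 2 * A 5 4 + A 0 1 * A 1 5 * A 2 3 * A 3 0 * A 4 4 * A 5 2 + A 0 1 * A 1 5 * A 2 3 * A 3 2 * A 4 0 * A 5 4 - A 0 1 * A 1 5 * A 2 3 * A 3 2 * A 4 4 * A 5 0 - A 0 1 * A 1 5 * A 2 3 * A 3 4 * A 4 0 * A 5 2 + A 0 1 * A 1 5 * A 2 3 * A 3 4 * A 4 2 * A 5 0 + A 0 1 * A 1 5 * A 2 4 * A 3 0 * A 4 2 * A 5 3 - A 0 1 * A 1 5 * A 2 4 * A 3 0 * A 4 3 * A 5 2 - A 0 1 * A 1 5 * A 2 4 * A 3 2 * A 4 0 * A 5 3 + A 0 1 * A 1 5 * A 2 4 * A 3 2 * A 4 3 * A 5 0 + A 0 1 * A 1 5 * A 2 4 *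 A 3 3 * A 4 0 * A 5 2 - A 0 1 * A 1 5 * A 2 4 * A 3 3 * A 4 2 * A 5 0 + A 0 2 * A 1 0 * A 2 1 * A 3 3 * A 4 4 * A 5 5 - A 0 2 * A 1 0 * A 2 1 * A 3 3 * A 4 5 * A 5 4 - A 0 2 * A 1 0 * A 2 1 * A 3 4 * A 4 3 * A 5 5 + A 0 2 * A 1 0 * A 2 1 * A 3 4 * A 4 5 * A 5 3 + A 0 2 * A 1 0 * A 2 1 * A 3 5 * A 4 3 * A 5 4 - A 0 2 * A 1 0 * A 2 1 * A 3 5 * A 4 4 * A 5 3 - A 0 2 * A 1 0 * A 2 3 * A 3 1 * A 4 4 * A 5 5 + A 0 2 * A 1 0 * A 2 3 * A 3 1 * A 4 5 * A 5 4 + A 0 2 * A 1 0 * A 2 3 * A 3 4 * A 4 1 * A 5 5 - A 0 2 * A 1 0 * A 2 3 * A 3 4 * A 4 5 * A 5 1 - A 0 2 * A 1 0 * A 2 3 * A 3 5 * A 4 1 * A 5 4 + A 0 2 * A 1 0 * A 2 3 * A 3 5 * A 4 4 * A 5 1 + A 0 2 * A 1 0 * A 2 4 * A 3 1 * A 4 3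 * A 5 5 - A 0 2 * A 1 0 * A 2 4 * A 3 1 * A 4 5 * A 5 3 - A 0 2 * A 1 0 * A 2 4 * A 3 3 * A 4 1 * A 5 5 + A 0 2 * A 1 0 * A 2 4 * A 3 3 * A 4 5 * A 5 1 + A 0 2 * A 1 0 * A 2 4 * A 3 5 * A 4 1 * A 5 3 - A 0 2 * A 1 0 * A 2 4 * A 3 5 * A 4 3 * A 5 1 - A 0 2 * A 1 0 * A 2 5 * A 3 1 * A 4 3 * A 5 4 + A 0 2 * A 1 0 * A 2 5 * A 3 1 * A 4 4 * A 5 3 + A 0 2 * A 1 0 * A 2 5 * A 3 3 * A 4 1 * A 5 4 - A 0 2 * A 1 0 * A 2 5 * A 3 3 * A 4 4 * A 5 1 - A 0 2 * A 1 0 * A 2 5 * A 3 4 * A 4 1 * A 5 3 + A 0 2 * A 1 0 * A 2 5 * A 3 4 * A 4 3 * A 5 1 - A 0 2 * A 1 1 * A 2 0 * A 3 3 * A 4 4 * A 5 5 + A 0 2 * A 1 1 * A 2 0 * A 3 3 * A 4 5 * A 5 4 + A 0 2 * A 1 1 * A 2 0 * A 3 4 * A 4 3 * A 5 5 - A 0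 2 * A 1 1 * A 2 0 * A 3 4 * A 4 5 * A 5 3 - A 0 2 * A 1 1 * A 2 0 * A 3 5 * A 4 3 * A 5 4 + A 0 2 * A 1 1 * A 2 0 * A 3 5 * A 4 4 * A 5 3 + A 0 2 * A 1 1 * A 2 3 * A 3 0 * A 4 4 * A 5 5 - A 0 2 * A 1 1 * A 2 3 * A 3 0 * A 4 5 * A 5 4 - A 0 2 * A 1 1 * A 2 3 * A 3 4 * A 4 0 * A 5 5 + A 0 2 * A 1 1 * A 2 3 * A 3 4 * A 4 5 * A 5 0 + A 0 2 * A 1 1 * A 2 3 * A 3 5 * A 4 0 * A 5 4 - A 0 2 * A 1 1 * A 2 3 * A 3 5 * A 4 4 * A 5 0 - A 0 2 * A 1 1 * A 2 4 * A 3 0 * A 4 3 * A 5 5 + A 0 2 * A 1 1 * A 2 4 * A 3 0 * A 4 5 * A 5 3 + A 0 2 * A 1 1 * A 2 4 * A 3 3 * A 4 0 * A 5 5 - A 0 2 * A 1 1 * A 2 4 * A 3 3 * A 4 5 * A 5 0 - A 0 2 * A 1 1 * A 2 4 * A 3 5 * A 4 0 * A 5 3 + A 0 2 * A 1 1 * A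 2 4 * A 3 5 * A 4 3 * A 5 0 + A 0 2 * A 1 1 * A 2 5 * A 3 0 * A 4 3 * A 5 4 - A 0 2 * A 1 1 * A 2 5 * A 3 0 * A 4 4 * A 5 3 - A 0 2 * A 1 1 * A 2 5 * A 3 3 * A 4 0 * A 5 4 + A 0 2 * A 1 1 * A 2 5 * A 3 3 * A 4 4 * A 5 0 + A 0 2 * A 1 1 * A 2 5 * A 3 4 * A 4 0 * A 5 3 - A 0 2 * A 1 1 * A 2 5 * A 3 4 * A 4 3 * A 5 0 + A 0 2 * A 1 3 * A 2 0 * A 3 1 * A 4 4 * A 5 5 - A 0 2 * A 1 3 * A 2 0 * A 3 1 * A 4 5 * A 5 4 - A 0 2 * A 1 3 * A 2 0 * A 3 4 * A 4 1 * A 5 5 + A 0 2 * A 1 3 * A 2 0 * A 3 4 * A 4 5 * A 5 1 + A 0 2 * A 1 3 * A 2 0 * A 3 5 * A 4 1 * A 5 4 - A 0 2 * A 1 3 * A 2 0 * A 3 5 * A 4 4 * A 5 1 - A 0 2 * A 1 3 * A 2 1 * A 3 0 * A 4 4 * A 5 5 + A 0 2 * A 1 3 * A 2 1 * A 3 0 *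 A 4 5 * A 5 4 + A 0 2 * A 1 3 * A 2 1 * A 3 4 * A 4 0 * A 5 5 - A 0 2 * A 1 3 * A 2 1 * A 3 4 * A 4 5 * A 5 0 - A 0 2 * A 1 3 * A 2 1 * A 3 5 * A 4 0 * A 5 4 + A 0 2 * A 1 3 * A 2 1 * A 3 5 * A 4 4 * A 5 0 + A 0 2 * A 1 3 * A 2 4 * A 3 0 * A 4 1 * A 5 5 - A 0 2 * A 1 3 * A 2 4 * A 3 0 * A 4 5 * A 5 1 - A 0 2 * A 1 3 * A 2 4 * A 3 1 * A 4 0 * A 5 5 + A 0 2 * A 1 3 * A 2 4 * A 3 1 * A 4 5 * A 5 0 + A 0 2 * A 1 3 * A 2 4 * A 3 5 * A 4 0 * A 5 1 - A 0 2 * A 1 3 * A 2 4 * A 3 5 * A 4 1 * A 5 0 - A 0 2 * A 1 3 * A 2 5 * A 3 0 * A 4 1 * A 5 4 + A 0 2 * A 1 3 * A 2 5 * A 3 0 * A 4 4 * A 5 1 + A 0 2 * A 1 3 * A 2 5 * A 3 1 * A 4 0 * A 5 4 - A 0 2 * A 1 3 * A 2 5 * A 3 1 * A 4 4 * A 5 0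 - A 0 2 * A 1 3 * A 2 5 * A 3 4 * A 4 0 * A 5 1 + A 0 2 * A 1 3 * A 2 5 * A 3 4 * A 4 1 * A 5 0 - A 0 2 * A 1 4 * A 2 0 * A 3 1 * A 4 3 * A 5 5 + A 0 2 * A 1 4 * A 2 0 * A 3 1 * A 4 5 * A 5 3 + A 0 2 * A 1 4 * A 2 0 * A 3 3 * A 4 1 * A 5 5 - A 0 2 * A 1 4 * A 2 0 * A 3 3 * A 4 5 * A 5 1 - A 0 2 * A 1 4 * A 2 0 * A 3 5 * A 4 1 * A 5 3 + A 0 2 * A 1 4 * A 2 0 * A 3 5 * A 4 3 * A 5 1 + A 0 2 * A 1 4 * A 2 1 * A 3 0 * A 4 3 * A 5 5 - A 0 2 * A 1 4 * A 2 1 * A 3 0 * A 4 5 * A 5 3 - A 0 2 * A 1 4 * A 2 1 * A 3 3 * A 4 0 * A 5 5 + A 0 2 * A 1 4 * A 2 1 * A 3 3 * A 4 5 * A 5 0 + A 0 2 * A 1 4 * A 2 1 * A 3 5 * A 4 0 * A 5 3 - A 0 2 * A 1 4 * A 2 1 * A 3 5 * A 4 3 * A 5 0 - A 0 2 * A 1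 4 * A 2 3 * A 3 0 * A 4 1 * A 5 5 + A 0 2 * A 1 4 * A 2 3 * A 3 0 * A 4 5 * A 5 1 + A 0 2 * A 1 4 * A 2 3 * A 3 1 * A 4 0 * A 5 5 - A 0 2 * A 1 4 * A 2 3 * A 3 1 * A 4 5 * A 5 0 - A 0 2 * A 1 4 * A 2 3 * A 3 5 * A 4 0 * A 5 1 + A 0 2 * A 1 4 * A 2 3 * A 3 5 * A 4 1 * A 5 0 + A 0 2 * A 1 4 * A 2 5 * A 3 0 * A 4 1 * A 5 3 - A 0 2 * A 1 4 * A 2 5 * A 3 0 * A 4 3 * A 5 1 - A 0 2 * A 1 4 * A 2 5 * A 3 1 * A 4 0 * A 5 3 + A 0 2 * A 1 4 * A 2 5 * A 3 1 * A 4 3 * A 5 0 + A 0 2 * A 1 4 * A 2 5 * A 3 3 * A 4 0 * A 5 1 - A 0 2 * A 1 4 * A 2 5 * A 3 3 * A 4 1 * A 5 0 + A 0 2 * A 1 5 * A 2 0 * A 3 1 * A 4 3 * A 5 4 - A 0 2 * A 1 5 * A 2 0 * A 3 1 * A 4 4 * A 5 3 - A 0 2 * A 1 5 * A 2 0 * A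 3 3 * A 4 1 * A 5 4 + A 0 2 * A 1 5 * A 2 0 * A 3 3 * A 4 4 * A 5 1 + A 0 2 * A 1 5 * A 2 0 * A 3 4 * A 4 1 * A 5 3 - A 0 2 * A 1 5 * A 2 0 * A 3 4 * A 4 3 * A 5 1 - A 0 2 * A 1 5 * A 2 1 * A 3 0 * A 4 3 * A 5 4 + A 0 2 * A 1 5 * A 2 1 * A 3 0 * A 4 4 * A 5 3 + A 0 2 * A 1 5 * A 2 1 * A 3 3 * A 4 0 * A 5 4 - A 0 2 * A 1 5 * A 2 1 * A 3 3 * A 4 4 * A 5 0 - A 0 2 * A 1 5 * A 2 1 * A 3 4 * A 4 0 * A 5 3 + A 0 2 * A 1 5 * A 2 1 * A 3 4 * A 4 3 * A 5 0 + A 0 2 * A 1 5 * A 2 3 * A 3 0 * A 4 1 * A 5 4 - A 0 2 * A 1 5 * A 2 3 * A 3 0 * A 4 4 * A 5 1 - A 0 2 * A 1 5 * A 2 3 * A 3 1 * A 4 0 * A 5 4 + A 0 2 * A 1 5 * A 2 3 * A 3 1 * A 4 4 * A 5 0 + A 0 2 * A 1 5 * A 2 3 * A 3 4 * A 4 0 *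 A 5 1 - A 0 2 * A 1 5 * A 2 3 * A 3 4 * A 4 1 * A 5 0 - A 0 2 * A 1 5 * A 2 4 * A 3 0 * A 4 1 * A 5 3 + A 0 2 * A 1 5 * A 2 4 * A 3 0 * A 4 3 * A 5 1 + A 0 2 * A 1 5 * A 2 4 * A 3 1 * A 4 0 * A 5 3 - A 0 2 * A 1 5 * A 2 4 * A 3 1 * A 4 3 * A 5 0 - A 0 2 * A 1 5 * A 2 4 * A 3 3 * A 4 0 * A 5 1 + A 0 2 * A 1 5 * A 2 4 * A 3 3 * A 4 1 * A 5 0 - A 0 3 * A 1 0 * A 2 1 * A 3 2 * A 4 4 * A 5 5 + A 0 3 * A 1 0 * A 2 1 * A 3 2 * A 4 5 * A 5 4 + A 0 3 * A 1 0 * A 2 1 * A 3 4 * A 4 2 * A 5 5 - A 0 3 * A 1 0 * A 2 1 * A 3 4 * A 4 5 * A 5 2 - A 0 3 * A 1 0 * A 2 1 * A 3 5 * A 4 2 * A 5 4 + A 0 3 * A 1 0 * A 2 1 * A 3 5 * A 4 4 * A 5 2 + A 0 3 * A 1 0 * A 2 2 * A 3 1 * A 4 4 * A 5 5 - A 0 3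 * A 1 0 * A 2 2 * A 3 1 * A 4 5 * A 5 4 - A 0 3 * A 1 0 * A 2 2 * A 3 4 * A 4 1 * A 5 5 + A 0 3 * A 1 0 * A 2 2 * A 3 4 * A 4 5 * A 5 1 + A 0 3 * A 1 0 * A 2 2 * A 3 5 * A 4 1 * A 5 4 - A 0 3 * A 1 0 * A 2 2 * A 3 5 * A 4 4 * A 5 1 - A 0 3 * A 1 0 * A 2 4 * A 3 1 * A 4 2 * A 5 5 + A 0 3 * A 1 0 * A 2 4 * A 3 1 * A 4 5 * A 5 2 + A 0 3 * A 1 0 * A 2 4 * A 3 2 * A 4 1 * A 5 5 - A 0 3 * A 1 0 * A 2 4 * A 3 2 * A 4 5 * A 5 1 - A 0 3 * A 1 0 * A 2 4 * A 3 5 * A 4 1 * A 5 2 + A 0 3 * A 1 0 * A 2 4 * A 3 5 * A 4 2 * A 5 1 + A 0 3 * A 1 0 * A 2 5 * A 3 1 * A 4 2 * A 5 4 - A 0 3 * A 1 0 * A 2 5 * A 3 1 * A 4 4 * A 5 2 - A 0 3 * A 1 0 * A 2 5 * A 3 2 * A 4 1 * A 5 4 + A 0 3 * A 1 0 * A 2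 5 * A 3 2 * A 4 4 * A 5 1 + A 0 3 * A 1 0 * A 2 5 * A 3 4 * A 4 1 * A 5 2 - A 0 3 * A 1 0 * A 2 5 * A 3 4 * A 4 2 * A 5 1 + A 0 3 * A 1 1 * A 2 0 * A 3 2 * A 4 4 * A 5 5 - A 0 3 * A 1 1 * A 2 0 * A 3 2 * A 4 5 * A 5 4 - A 0 3 * A 1 1 * A 2 0 * A 3 4 * A 4 2 * A 5 5 + A 0 3 * A 1 1 * A 2 0 * A 3 4 * A 4 5 * A 5 2 + A 0 3 * A 1 1 * A 2 0 * A 3 5 * A 4 2 * A 5 4 - A 0 3 * A 1 1 * A 2 0 * A 3 5 * A 4 4 * A 5 2 - A 0 3 * A 1 1 * A 2 2 * A 3 0 * A 4 4 * A 5 5 + A 0 3 * A 1 1 * A 2 2 * A 3 0 * A 4 5 * A 5 4 + A 0 3 * A 1 1 * A 2 2 * A 3 4 * A 4 0 * A 5 5 - A 0 3 * A 1 1 * A 2 2 * A 3 4 * A 4 5 * A 5 0 - A 0 3 * A 1 1 * A 2 2 * A 3 5 * A 4 0 * A 5 4 + A 0 3 * A 1 1 * A 2 2 * A 3 5 * A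 4 4 * A 5 0 + A 0 3 * A 1 1 * A 2 4 * A 3 0 * A 4 2 * A 5 5 - A 0 3 * A 1 1 * A 2 4 * A 3 0 * A 4 5 * A 5 2 - A 0 3 * A 1 1 * A 2 4 * A 3 2 * A 4 0 * A 5 5 + A 0 3 * A 1 1 * A 2 4 * A 3 2 * A 4 5 * A 5 0 + A 0 3 * A 1 1 * A 2 4 * A 3 5 * A 4 0 * A 5 2 - A 0 3 * A 1 1 * A 2 4 * A 3 5 * A 4 2 * A 5 0 - A 0 3 * A 1 1 * A 2 5 * A 3 0 * A 4 2 * A 5 4 + A 0 3 * A 1 1 * A 2 5 * A 3 0 * A 4 4 * A 5 2 + A 0 3 * A 1 1 * A 2 5 * A 3 2 * A 4 0 * A 5 4 - A 0 3 * A 1 1 * A 2 5 * A 3 2 * A 4 4 * A 5 0 - A 0 3 * A 1 1 * A 2 5 * A 3 4 * A 4 0 * A 5 2 + A 0 3 * A 1 1 * A 2 5 * A 3 4 * A 4 2 * A 5 0 - A 0 3 * A 1 2 * A 2 0 * A 3 1 * A 4 4 * A 5 5 + A 0 3 * A 1 2 * A 2 0 * A 3 1 * A 4 5 * A 5 4 +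 A 0 3 * A 1 2 * A 2 0 * A 3 4 * A 4 1 * A 5 5 - A 0 3 * A 1 2 * A 2 0 * A 3 4 * A 4 5 * A 5 1 - A 0 3 * A 1 2 * A 2 0 * A 3 5 * A 4 1 * A 5 4 + A 0 3 * A 1 2 * A 2 0 * A 3 5 * A 4 4 * A 5 1 + A 0 3 * A 1 2 * A 2 1 * A 3 0 * A 4 4 * A 5 5 - A 0 3 * A 1 2 * A 2 1 * A 3 0 * A 4 5 * A 5 4 - A 0 3 * A 1 2 * A 2 1 * A 3 4 * A 4 0 * A 5 5 + A 0 3 * A 1 2 * A 2 1 * A 3 4 * A 4 5 * A 5 0 + A 0 3 * A 1 2 * A 2 1 * A 3 5 * A 4 0 * A 5 4 - A 0 3 * A 1 2 * A 2 1 * A 3 5 * A 4 4 * A 5 0 - A 0 3 * A 1 2 * A 2 4 * A 3 0 * A 4 1 * A 5 5 + A 0 3 * A 1 2 * A 2 4 * A 3 0 * A 4 5 * A 5 1 + A 0 3 * A 1 2 * A 2 4 * A 3 1 * A 4 0 * A 5 5 - A 0 3 * A 1 2 * A 2 4 * A 3 1 * A 4 5 * A 5 0 - A 0 3 * A 1 2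 * A 2 4 * A 3 5 * A 4 0 * A 5 1 + A 0 3 * A 1 2 * A 2 4 * A 3 5 * A 4 1 * A 5 0 + A 0 3 * A 1 2 * A 2 5 * A 3 0 * A 4 1 * A 5 4 - A 0 3 * A 1 2 * A 2 5 * A 3 0 * A 4 4 * A 5 1 - A 0 3 * A 1 2 * A 2 5 * A 3 1 * A 4 0 * A 5 4 + A 0 3 * A 1 2 * A 2 5 * A 3 1 * A 4 4 * A 5 0 + A 0 3 * A 1 2 * A 2 5 * A 3 4 * A 4 0 * A 5 1 - A 0 3 * A 1 2 * A 2 5 * A 3 4 * A 4 1 * A 5 0 + A 0 3 * A 1 4 * A 2 0 * A 3 1 * A 4 2 * A 5 5 - A 0 3 * A 1 4 * A 2 0 * A 3 1 * A 4 5 * A 5 2 - A 0 3 * A 1 4 * A 2 0 * A 3 2 * A 4 1 * A 5 5 + A 0 3 * A 1 4 * A 2 0 * A 3 2 * A 4 5 * A 5 1 + A 0 3 * A 1 4 * A 2 0 * A 3 5 * A 4 1 * A 5 2 - A 0 3 * A 1 4 * A 2 0 * A 3 5 * A 4 2 * A 5 1 - A 0 3 * A 1 4 * A 2 1 * A 3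 0 * A 4 2 * A 5 5 + A 0 3 * A 1 4 * A 2 1 * A 3 0 * A 4 5 * A 5 2 + A 0 3 * A 1 4 * A 2 1 * A 3 2 * A 4 0 * A 5 5 - A 0 3 * A 1 4 * A 2 1 * A 3 2 * A 4 5 * A 5 0 - A 0 3 * A 1 4 * A 2 1 * A 3 5 * A 4 0 * A 5 2 + A 0 3 * A 1 4 * A 2 1 * A 3 5 * A 4 2 * A 5 0 + A 0 3 * A 1 4 * A 2 2 * A 3 0 * A 4 1 * A 5 5 - A 0 3 * A 1 4 * A 2 2 * A 3 0 * A 4 5 * A 5 1 - A 0 3 * A 1 4 * A 2 2 * A 3 1 * A 4 0 * A 5 5 + A 0 3 * A 1 4 * A 2 2 * A 3 1 * A 4 5 * A 5 0 + A 0 3 * A 1 4 * A 2 2 * A 3 5 * A 4 0 * A 5 1 - A 0 3 * A 1 4 * A 2 2 * A 3 5 * A 4 1 * A 5 0 - A 0 3 * A 1 4 * A 2 5 * A 3 0 * A 4 1 * A 5 2 + A 0 3 * A 1 4 * A 2 5 * A 3 0 * A 4 2 * A 5 1 + A 0 3 * A 1 4 * A 2 5 * A 3 1 * A 4 0 * A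 5 2 - A 0 3 * A 1 4 * A 2 5 * A 3 1 * A 4 2 * A 5 0 - A 0 3 * A 1 4 * A 2 5 * A 3 2 * A 4 0 * A 5 1 + A 0 3 * A 1 4 * A 2 5 * A 3 2 * A 4 1 * A 5 0 - A 0 3 * A 1 5 * A 2 0 * A 3 1 * A 4 2 * A 5 4 + A 0 3 * A 1 5 * A 2 0 * A 3 1 * A 4 4 * A 5 2 + A 0 3 * A 1 5 * A 2 0 * A 3 2 * A 4 1 * A 5 4 - A 0 3 * A 1 5 * A 2 0 * A 3 2 * A 4 4 * A 5 1 - A 0 3 * A 1 5 * A 2 0 * A 3 4 * A 4 1 * A 5 2 + A 0 3 * A 1 5 * A 2 0 * A 3 4 * A 4 2 * A 5 1 + A 0 3 * A 1 5 * A 2 1 * A 3 0 * A 4 2 * A 5 4 - A 0 3 * A 1 5 * A 2 1 * A 3 0 * A 4 4 * A 5 2 - A 0 3 * A 1 5 * A 2 1 * A 3 2 * A 4 0 * A 5 4 + A 0 3 * A 1 5 * A 2 1 * A 3 2 * A 4 4 * A 5 0 + A 0 3 * A 1 5 * A 2 1 * A 3 4 * A 4 0 * A 5 2 - A 0 3 *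 A 1 5 * A 2 1 * A 3 4 * A 4 2 * A 5 0 - A 0 3 * A 1 5 * A 2 2 * A 3 0 * A 4 1 * A 5 4 + A 0 3 * A 1 5 * A 2 2 * A 3 0 * A 4 4 * A 5 1 + A 0 3 * A 1 5 * A 2 2 * A 3 1 * A 4 0 * A 5 4 - A 0 3 * A 1 5 * A 2 2 * A 3 1 * A 4 4 * A 5 0 - A 0 3 * A 1 5 * A 2 2 * A 3 4 * A 4 0 * A 5 1 + A 0 3 * A 1 5 * A 2 2 * A 3 4 * A 4 1 * A 5 0 + A 0 3 * A 1 5 * A 2 4 * A 3 0 * A 4 1 * A 5 2 - A 0 3 * A 1 5 * A 2 4 * A 3 0 * A 4 2 * A 5 1 - A 0 3 * A 1 5 * A 2 4 * A 3 1 * A 4 0 * A 5 2 + A 0 3 * A 1 5 * A 2 4 * A 3 1 * A 4 2 * A 5 0 + A 0 3 * A 1 5 * A 2 4 * A 3 2 * A 4 0 * A 5 1 - A 0 3 * A 1 5 * A 2 4 * A 3 2 * A 4 1 * A 5 0 + A 0 4 * A 1 0 * A 2 1 * A 3 2 * A 4 3 * A 5 5 - A 0 4 * A 1 0 * A 2 1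 * A 3 2 * A 4 5 * A 5 3 - A 0 4 * A 1 0 * A 2 1 * A 3 3 * A 4 2 * A 5 5 + A 0 4 * A 1 0 * A 2 1 * A 3 3 * A 4 5 * A 5 2 + A 0 4 * A 1 0 * A 2 1 * A 3 5 * A 4 2 * A 5 3 - A 0 4 * A 1 0 * A 2 1 * A 3 5 * A 4 3 * A 5 2 - A 0 4 * A 1 0 * A 2 2 * A 3 1 * A 4 3 * A 5 5 + A 0 4 * A 1 0 * A 2 2 * A 3 1 * A 4 5 * A 5 3 + A 0 4 * A 1 0 * A 2 2 * A 3 3 * A 4 1 * A 5 5 - A 0 4 * A 1 0 * A 2 2 * A 3 3 * A 4 5 * A 5 1 - A 0 4 * A 1 0 * A 2 2 * A 3 5 * A 4 1 * A 5 3 + A 0 4 * A 1 0 * A 2 2 * A 3 5 * A 4 3 * A 5 1 + A 0 4 * A 1 0 * A 2 3 * A 3 1 * A 4 2 * A 5 5 - A 0 4 * A 1 0 * A 2 3 * A 3 1 * A 4 5 * A 5 2 - A 0 4 * A 1 0 * A 2 3 * A 3 2 * A 4 1 * A 5 5 + A 0 4 * A 1 0 * A 2 3 * A 3 2 * A 4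 5 * A 5 1 + A 0 4 * A 1 0 * A 2 3 * A 3 5 * A 4 1 * A 5 2 - A 0 4 * A 1 0 * A 2 3 * A 3 5 * A 4 2 * A 5 1 - A 0 4 * A 1 0 * A 2 5 * A 3 1 * A 4 2 * A 5 3 + A 0 4 * A 1 0 * A 2 5 * A 3 1 * A 4 3 * A 5 2 + A 0 4 * A 1 0 * A 2 5 * A 3 2 * A 4 1 * A 5 3 - A 0 4 * A 1 0 * A 2 5 * A 3 2 * A 4 3 * A 5 1 - A 0 4 * A 1 0 * A 2 5 * A 3 3 * A 4 1 * A 5 2 + A 0 4 * A 1 0 * A 2 5 * A 3 3 * A 4 2 * A 5 1 - A 0 4 * A 1 1 * A 2 0 * A 3 2 * A 4 3 * A 5 5 + A 0 4 * A 1 1 * A 2 0 * A 3 2 * A 4 5 * A 5 3 + A 0 4 * A 1 1 * A 2 0 * A 3 3 * A 4 2 * A 5 5 - A 0 4 * A 1 1 * A 2 0 * A 3 3 * A 4 5 * A 5 2 - A 0 4 * A 1 1 * A 2 0 * A 3 5 * A 4 2 * A 5 3 + A 0 4 * A 1 1 * A 2 0 * A 3 5 * A 4 3 * A 5 2 + A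 0 4 * A 1 1 * A 2 2 * A 3 0 * A 4 3 * A 5 5 - A 0 4 * A 1 1 * A 2 2 * A 3 0 * A 4 5 * A 5 3 - A 0 4 * A 1 1 * A 2 2 * A 3 3 * A 4 0 * A 5 5 + A 0 4 * A 1 1 * A 2 2 * A 3 3 * A 4 5 * A 5 0 + A 0 4 * A 1 1 * A 2 2 * A 3 5 * A 4 0 * A 5 3 - A 0 4 * A 1 1 * A 2 2 * A 3 5 * A 4 3 * A 5 0 - A 0 4 * A 1 1 * A 2 3 * A 3 0 * A 4 2 * A 5 5 + A 0 4 * A 1 1 * A 2 3 * A 3 0 * A 4 5 * A 5 2 + A 0 4 * A 1 1 * A 2 3 * A 3 2 * A 4 0 * A 5 5 - A 0 4 * A 1 1 * A 2 3 * A 3 2 * A 4 5 * A 5 0 - A 0 4 * A 1 1 * A 2 3 * A 3 5 * A 4 0 * A 5 2 + A 0 4 * A 1 1 * A 2 3 * A 3 5 * A 4 2 * A 5 0 + A 0 4 * A 1 1 * A 2 5 * A 3 0 * A 4 2 * A 5 3 - A 0 4 * A 1 1 * A 2 5 * A 3 0 * A 4 3 * A 5 2 - A 0 4 * A 1 1 *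 A 2 5 * A 3 2 * A 4 0 * A 5 3 + A 0 4 * A 1 1 * A 2 5 * A 3 2 * A 4 3 * A 5 0 + A 0 4 * A 1 1 * A 2 5 * A 3 3 * A 4 0 * A 5 2 - A 0 4 * A 1 1 * A 2 5 * A 3 3 * A 4 2 * A 5 0 + A 0 4 * A 1 2 * A 2 0 * A 3 1 * A 4 3 * A 5 5 - A 0 4 * A 1 2 * A 2 0 * A 3 1 * A 4 5 * A 5 3 - A 0 4 * A 1 2 * A 2 0 * A 3 3 * A 4 1 * A 5 5 + A 0 4 * A 1 2 * A 2 0 * A 3 3 * A 4 5 * A 5 1 + A 0 4 * A 1 2 * A 2 0 * A 3 5 * A 4 1 * A 5 3 - A 0 4 * A 1 2 * A 2 0 * A 3 5 * A 4 3 * A 5 1 - A 0 4 * A 1 2 * A 2 1 * A 3 0 * A 4 3 * A 5 5 + A 0 4 * A 1 2 * A 2 1 * A 3 0 * A 4 5 * A 5 3 + A 0 4 * A 1 2 * A 2 1 * A 3 3 * A 4 0 * A 5 5 - A 0 4 * A 1 2 * A 2 1 * A 3 3 * A 4 5 * A 5 0 - A 0 4 * A 1 2 * A 2 1 * A 3 5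 * A 4 0 * A 5 3 + A 0 4 * A 1 2 * A 2 1 * A 3 5 * A 4 3 * A 5 0 + A 0 4 * A 1 2 * A 2 3 * A 3 0 * A 4 1 * A 5 5 - A 0 4 * A 1 2 * A 2 3 * A 3 0 * A 4 5 * A 5 1 - A 0 4 * A 1 2 * A 2 3 * A 3 1 * A 4 0 * A 5 5 + A 0 4 * A 1 2 * A 2 3 * A 3 1 * A 4 5 * A 5 0 + A 0 4 * A 1 2 * A 2 3 * A 3 5 * A 4 0 * A 5 1 - A 0 4 * A 1 2 * A 2 3 * A 3 5 * A 4 1 * A 5 0 - A 0 4 * A 1 2 * A 2 5 * A 3 0 * A 4 1 * A 5 3 + A 0 4 * A 1 2 * A 2 5 * A 3 0 * A 4 3 * A 5 1 + A 0 4 * A 1 2 * A 2 5 * A 3 1 * A 4 0 * A 5 3 - A 0 4 * A 1 2 * A 2 5 * A 3 1 * A 4 3 * A 5 0 - A 0 4 * A 1 2 * A 2 5 * A 3 3 * A 4 0 * A 5 1 + A 0 4 * A 1 2 * A 2 5 * A 3 3 * A 4 1 * A 5 0 - A 0 4 * A 1 3 * A 2 0 * A 3 1 * A 4 2 * A 5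 5 + A 0 4 * A 1 3 * A 2 0 * A 3 1 * A 4 5 * A 5 2 + A 0 4 * A 1 3 * A 2 0 * A 3 2 * A 4 1 * A 5 5 - A 0 4 * A 1 3 * A 2 0 * A 3 2 * A 4 5 * A 5 1 - A 0 4 * A 1 3 * A 2 0 * A 3 5 * A 4 1 * A 5 2 + A 0 4 * A 1 3 * A 2 0 * A 3 5 * A 4 2 * A 5 1 + A 0 4 * A 1 3 * A 2 1 * A 3 0 * A 4 2 * A 5 5 - A 0 4 * A 1 3 * A 2 1 * A 3 0 * A 4 5 * A 5 2 - A 0 4 * A 1 3 * A 2 1 * A 3 2 * A 4 0 * A 5 5 + A 0 4 * A 1 3 * A 2 1 * A 3 2 * A 4 5 * A 5 0 + A 0 4 * A 1 3 * A 2 1 * A 3 5 * A 4 0 * A 5 2 - A 0 4 * A 1 3 * A 2 1 * A 3 5 * A 4 2 * A 5 0 - A 0 4 * A 1 3 * A 2 2 * A 3 0 * A 4 1 * A 5 5 + A 0 4 * A 1 3 * A 2 2 * A 3 0 * A 4 5 * A 5 1 + A 0 4 * A 1 3 * A 2 2 * A 3 1 * A 4 0 * A 5 5 - A 0 4 * A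 1 3 * A 2 2 * A 3 1 * A 4 5 * A 5 0 - A 0 4 * A 1 3 * A 2 2 * A 3 5 * A 4 0 * A 5 1 + A 0 4 * A 1 3 * A 2 2 * A 3 5 * A 4 1 * A 5 0 + A 0 4 * A 1 3 * A 2 5 * A 3 0 * A 4 1 * A 5 2 - A 0 4 * A 1 3 * A 2 5 * A 3 0 * A 4 2 * A 5 1 - A 0 4 * A 1 3 * A 2 5 * A 3 1 * A 4 0 * A 5 2 + A 0 4 * A 1 3 * A 2 5 * A 3 1 * A 4 2 * A 5 0 + A 0 4 * A 1 3 * A 2 5 * A 3 2 * A 4 0 * A 5 1 - A 0 4 * A 1 3 * A 2 5 * A 3 2 * A 4 1 * A 5 0 + A 0 4 * A 1 5 * A 2 0 * A 3 1 * A 4 2 * A 5 3 - A 0 4 * A 1 5 * A 2 0 * A 3 1 * A 4 3 * A 5 2 - A 0 4 * A 1 5 * A 2 0 * A 3 2 * A 4 1 * A 5 3 + A 0 4 * A 1 5 * A 2 0 * A 3 2 * A 4 3 * A 5 1 + A 0 4 * A 1 5 * A 2 0 * A 3 3 * A 4 1 * A 5 2 - A 0 4 * A 1 5 * A 2 0 *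 A 3 3 * A 4 2 * A 5 1 - A 0 4 * A 1 5 * A 2 1 * A 3 0 * A 4 2 * A 5 3 + A 0 4 * A 1 5 * A 2 1 * A 3 0 * A 4 3 * A 5 2 + A 0 4 * A 1 5 * A 2 1 * A 3 2 * A 4 0 * A 5 3 - A 0 4 * A 1 5 * A 2 1 * A 3 2 * A 4 3 * A 5 0 - A 0 4 * A 1 5 * A 2 1 * A 3 3 * A 4 0 * A 5 2 + A 0 4 * A 1 5 * A 2 1 * A 3 3 * A 4 2 * A 5 0 + A 0 4 * A 1 5 * A 2 2 * A 3 0 * A 4 1 * A 5 3 - A 0 4 * A 1 5 * A 2 2 * A 3 0 * A 4 3 * A 5 1 - A 0 4 * A 1 5 * A 2 2 * A 3 1 * A 4 0 * A 5 3 + A 0 4 * A 1 5 * A 2 2 * A 3 1 * A 4 3 * A 5 0 + A 0 4 * A 1 5 * A 2 2 * A 3 3 * A 4 0 * A 5 1 - A 0 4 * A 1 5 * A 2 2 * A 3 3 * A 4 1 * A 5 0 - A 0 4 * A 1 5 * A 2 3 * A 3 0 * A 4 1 * A 5 2 + A 0 4 * A 1 5 * A 2 3 * A 3 0 * A 4 2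 * A 5 1 + A 0 4 * A 1 5 * A 2 3 * A 3 1 * A 4 0 * A 5 2 - A 0 4 * A 1 5 * A 2 3 * A 3 1 * A 4 2 * A 5 0 - A 0 4 * A 1 5 * A 2 3 * A 3 2 * A 4 0 * A 5 1 + A 0 4 * A 1 5 * A 2 3 * A 3 2 * A 4 1 * A 5 0 - A 0 5 * A 1 0 * A 2 1 * A 3 2 * A 4 3 * A 5 4 + A 0 5 * A 1 0 * A 2 1 * A 3 2 * A 4 4 * A 5 3 + A 0 5 * A 1 0 * A 2 1 * A 3 3 * A 4 2 * A 5 4 - A 0 5 * A 1 0 * A 2 1 * A 3 3 * A 4 4 * A 5 2 - A 0 5 * A 1 0 * A 2 1 * A 3 4 * A 4 2 * A 5 3 + A 0 5 * A 1 0 * A 2 1 * A 3 4 * A 4 3 * A 5 2 + A 0 5 * A 1 0 * A 2 2 * A 3 1 * A 4 3 * A 5 4 - A 0 5 * A 1 0 * A 2 2 * A 3 1 * A 4 4 * A 5 3 - A 0 5 * A 1 0 * A 2 2 * A 3 3 * A 4 1 * A 5 4 + A 0 5 * A 1 0 * A 2 2 * A 3 3 * A 4 4 * A 5 1 + A 0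 5 * A 1 0 * A 2 2 * A 3 4 * A 4 1 * A 5 3 - A 0 5 * A 1 0 * A 2 2 * A 3 4 * A 4 3 * A 5 1 - A 0 5 * A 1 0 * A 2 3 * A 3 1 * A 4 2 * A 5 4 + A 0 5 * A 1 0 * A 2 3 * A 3 1 * A 4 4 * A 5 2 + A 0 5 * A 1 0 * A 2 3 * A 3 2 * A 4 1 * A 5 4 - A 0 5 * A 1 0 * A 2 3 * A 3 2 * A 4 4 * A 5 1 - A 0 5 * A 1 0 * A 2 3 * A 3 4 * A 4 1 * A 5 2 + A 0 5 * A 1 0 * A 2 3 * A 3 4 * A 4 2 * A 5 1 + A 0 5 * A 1 0 * A 2 4 * A 3 1 * A 4 2 * A 5 3 - A 0 5 * A 1 0 * A 2 4 * A 3 1 * A 4 3 * A 5 2 - A 0 5 * A 1 0 * A 2 4 * A 3 2 * A 4 1 * A 5 3 + A 0 5 * A 1 0 * A 2 4 * A 3 2 * A 4 3 * A 5 1 + A 0 5 * A 1 0 * A 2 4 * A 3 3 * A 4 1 * A 5 2 - A 0 5 * A 1 0 * A 2 4 * A 3 3 * A 4 2 * A 5 1 + A 0 5 * A 1 1 * A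 2 0 * A 3 2 * A 4 3 * A 5 4 - A 0 5 * A 1 1 * A 2 0 * A 3 2 * A 4 4 * A 5 3 - A 0 5 * A 1 1 * A 2 0 * A 3 3 * A 4 2 * A 5 4 + A 0 5 * A 1 1 * A 2 0 * A 3 3 * A 4 4 * A 5 2 + A 0 5 * A 1 1 * A 2 0 * A 3 4 * A 4 2 * A 5 3 - A 0 5 * A 1 1 * A 2 0 * A 3 4 * A 4 3 * A 5 2 - A 0 5 * A 1 1 * A 2 2 * A 3 0 * A 4 3 * A 5 4 + A 0 5 * A 1 1 * A 2 2 * A 3 0 * A 4 4 * A 5 3 + A 0 5 * A 1 1 * A 2 2 * A 3 3 * A 4 0 * A 5 4 - A 0 5 * A 1 1 * A 2 2 * A 3 3 * A 4 4 * A 5 0 - A 0 5 * A 1 1 * A 2 2 * A 3 4 * A 4 0 * A 5 3 + A 0 5 * A 1 1 * A 2 2 * A 3 4 * A 4 3 * A 5 0 + A 0 5 * A 1 1 * A 2 3 * A 3 0 * A 4 2 * A 5 4 - A 0 5 * A 1 1 * A 2 3 * A 3 0 * A 4 4 * A 5 2 - A 0 5 * A 1 1 * A 2 3 * A 3 2 *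 A 4 0 * A 5 4 + A 0 5 * A 1 1 * A 2 3 * A 3 2 * A 4 4 * A 5 0 + A 0 5 * A 1 1 * A 2 3 * A 3 4 * A 4 0 * A 5 2 - A 0 5 * A 1 1 * A 2 3 * A 3 4 * A 4 2 * A 5 0 - A 0 5 * A 1 1 * A 2 4 * A 3 0 * A 4 2 * A 5 3 + A 0 5 * A 1 1 * A 2 4 * A 3 0 * A 4 3 * A 5 2 + A 0 5 * A 1 1 * A 2 4 * A 3 2 * A 4 0 * A 5 3 - A 0 5 * A 1 1 * A 2 4 * A 3 2 * A 4 3 * A 5 0 - A 0 5 * A 1 1 * A 2 4 * A 3 3 * A 4 0 * A 5 2 + A 0 5 * A 1 1 * A 2 4 * A 3 3 * A 4 2 * A 5 0 - A 0 5 * A 1 2 * A 2 0 * A 3 1 * A 4 3 * A 5 4 + A 0 5 * A 1 2 * A 2 0 * A 3 1 * A 4 4 * A 5 3 + A 0 5 * A 1 2 * A 2 0 * A 3 3 * A 4 1 * A 5 4 - A 0 5 * A 1 2 * A 2 0 * A 3 3 * A 4 4 * A 5 1 - A 0 5 * A 1 2 * A 2 0 * A 3 4 * A 4 1 * A 5 3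 + A 0 5 * A 1 2 * A 2 0 * A 3 4 * A 4 3 * A 5 1 + A 0 5 * A 1 2 * A 2 1 * A 3 0 * A 4 3 * A 5 4 - A 0 5 * A 1 2 * A 2 1 * A 3 0 * A 4 4 * A 5 3 - A 0 5 * A 1 2 * A 2 1 * A 3 3 * A 4 0 * A 5 4 + A 0 5 * A 1 2 * A 2 1 * A 3 3 * A 4 4 * A 5 0 + A 0 5 * A 1 2 * A 2 1 * A 3 4 * A 4 0 * A 5 3 - A 0 5 * A 1 2 * A 2 1 * A 3 4 * A 4 3 * A 5 0 - A 0 5 * A 1 2 * A 2 3 * A 3 0 * A 4 1 * A 5 4 + A 0 5 * A 1 2 * A 2 3 * A 3 0 * A 4 4 * A 5 1 + A 0 5 * A 1 2 * A 2 3 * A 3 1 * A 4 0 * A 5 4 - A 0 5 * A 1 2 * A 2 3 * A 3 1 * A 4 4 * A 5 0 - A 0 5 * A 1 2 * A 2 3 * A 3 4 * A 4 0 * A 5 1 + A 0 5 * A 1 2 * A 2 3 * A 3 4 * A 4 1 * A 5 0 + A 0 5 * A 1 2 * A 2 4 * A 3 0 * A 4 1 * A 5 3 - A 0 5 * A 1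 2 * A 2 4 * A 3 0 * A 4 3 * A 5 1 - A 0 5 * A 1 2 * A 2 4 * A 3 1 * A 4 0 * A 5 3 + A 0 5 * A 1 2 * A 2 4 * A 3 1 * A 4 3 * A 5 0 + A 0 5 * A 1 2 * A 2 4 * A 3 3 * A 4 0 * A 5 1 - A 0 5 * A 1 2 * A 2 4 * A 3 3 * A 4 1 * A 5 0 + A 0 5 * A 1 3 * A 2 0 * A 3 1 * A 4 2 * A 5 4 - A 0 5 * A 1 3 * A 2 0 * A 3 1 * A 4 4 * A 5 2 - A 0 5 * A 1 3 * A 2 0 * A 3 2 * A 4 1 * A 5 4 + A 0 5 * A 1 3 * A 2 0 * A 3 2 * A 4 4 * A 5 1 + A 0 5 * A 1 3 * A 2 0 * A 3 4 * A 4 1 * A 5 2 - A 0 5 * A 1 3 * A 2 0 * A 3 4 * A 4 2 * A 5 1 - A 0 5 * A 1 3 * A 2 1 * A 3 0 * A 4 2 * A 5 4 + A 0 5 * A 1 3 * A 2 1 * A 3 0 * A 4 4 * A 5 2 + A 0 5 * A 1 3 * A 2 1 * A 3 2 * A 4 0 * A 5 4 - A 0 5 * A 1 3 * A 2 1 * A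 3 2 * A 4 4 * A 5 0 - A 0 5 * A 1 3 * A 2 1 * A 3 4 * A 4 0 * A 5 2 + A 0 5 * A 1 3 * A 2 1 * A 3 4 * A 4 2 * A 5 0 + A 0 5 * A 1 3 * A 2 2 * A 3 0 * A 4 1 * A 5 4 - A 0 5 * A 1 3 * A 2 2 * A 3 0 * A 4 4 * A 5 1 - A 0 5 * A 1 3 * A 2 2 * A 3 1 * A 4 0 * A 5 4 + A 0 5 * A 1 3 * A 2 2 * A 3 1 * A 4 4 * A 5 0 + A 0 5 * A 1 3 * A 2 2 * A 3 4 * A 4 0 * A 5 1 - A 0 5 * A 1 3 * A 2 2 * A 3 4 * A 4 1 * A 5 0 - A 0 5 * A 1 3 * A 2 4 * A 3 0 * A 4 1 * A 5 2 + A 0 5 * A 1 3 * A 2 4 * A 3 0 * A 4 2 * A 5 1 + A 0 5 * A 1 3 * A 2 4 * A 3 1 * A 4 0 * A 5 2 - A 0 5 * A 1 3 * A 2 4 * A 3 1 * A 4 2 * A 5 0 - A 0 5 * A 1 3 * A 2 4 * A 3 2 * A 4 0 * A 5 1 + A 0 5 * A 1 3 * A 2 4 * A 3 2 * A 4 1 *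 A 5 0 - A 0 5 * A 1 4 * A 2 0 * A 3 1 * A 4 2 * A 5 3 + A 0 5 * A 1 4 * A 2 0 * A 3 1 * A 4 3 * A 5 2 + A 0 5 * A 1 4 * A 2 0 * A 3 2 * A 4 1 * A 5 3 - A 0 5 * A 1 4 * A 2 0 * A 3 2 * A 4 3 * A 5 1 - A 0 5 * A 1 4 * A 2 0 * A 3 3 * A 4 1 * A 5 2 + A 0 5 * A 1 4 * A 2 0 * A 3 3 * A 4 2 * A 5 1 + A 0 5 * A 1 4 * A 2 1 * A 3 0 * A 4 2 * A 5 3 - A 0 5 * A 1 4 * A 2 1 * A 3 0 * A 4 3 * A 5 2 - A 0 5 * A 1 4 * A 2 1 * A 3 2 * A 4 0 * A 5 3 + A 0 5 * A 1 4 * A 2 1 * A 3 2 * A 4 3 * A 5 0 + A 0 5 * A 1 4 * A 2 1 * A 3 3 * A 4 0 * A 5 2 - A 0 5 * A 1 4 * A 2 1 * A 3 3 * A 4 2 * A 5 0 - A 0 5 * A 1 4 * A 2 2 * A 3 0 * A 4 1 * A 5 3 + A 0 5 * A 1 4 * A 2 2 * A 3 0 * A 4 3 * A 5 1 + A 0 5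 * A 1 4 * A 2 2 * A 3 1 * A 4 0 * A 5 3 - A 0 5 * A 1 4 * A 2 2 * A 3 1 * A 4 3 * A 5 0 - A 0 5 * A 1 4 * A 2 2 * A 3 3 * A 4 0 * A 5 1 + A 0 5 * A 1 4 * A 2 2 * A 3 3 * A 4 1 * A 5 0 + A 0 5 * A 1 4 * A 2 3 * A 3 0 * A 4 1 * A 5 2 - A 0 5 * A 1 4 * A 2 3 * A 3 0 * A 4 2 * A 5 1 - A 0 5 * A 1 4 * A 2 3 * A 3 1 * A 4 0 * A 5 2 + A 0 5 * A 1 4 * A 2 3 * A 3 1 * A 4 2 * A 5 0 + A 0 5 * A 1 4 * A 2 3 * A 3 2 * A 4 0 * A 5 1 - A 0 5 * A 1 4 * A 2 3 * A 3 2 * A 4 1 * A 5 0 := by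
  rw [det_succ_row_zero]
  simp only [Fin.sum_univ_six]
  rw [my_det_fin_5, my_det_fin_5, my_det_fin_5, my_det_fin_5, my_det_fin_5, my_det_fin_5]
  simp only [submatrix_apply, sa6_0_0, sa6_0_1, sa6_0_2, sa6_0_3, sa6_0_4, sa6_1_0, sa6_1_1, sa6_1_2, sa6_1_3, sa6_1_4, sa6_2_0, sa6_2_1, sa6_2_2, sa6_2_3, sa6_2_4, sa6_3_0, sa6_3_1, sa6_3_2, sa6_3_3, sa6_3_4, sa6_4_0, sa6_4_1, sa6_4_2, sa6_4_3, sa6_4_4, sa6_5_0, sa6_5_1, sa6_5_2, sa6_5_3, sa6_5_4,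
    sc6_0, sc6_1, sc6_2, sc6_3, sc6_4, vv6_0, vv6_1, vv6_2, vv6_3, vv6_4, vv6_5]
  ring

private lemma cv3' {α : Type*} (a b c d e f : α) : ![a,b,c,d,e,f] (3 : Fin 6) = d := rfl
private lemma cv4' {α : Type*} (a b c d e f : α) : ![a,b,c,d,e,f] (4 : Fin 6) = e := rfl
private lemma cv5' {α : Type*} (a b c d e f : α) : ![a,b,c,d,e,f] (5 : Fin 6) = f := rfl

set_option maxHeartbeats 4000000 in
set_option maxRecDepth 100000 in
lemma core_identity {𝔽 : Type*} [Field 𝔽] (v : Fin 6 → Fin 3 → 𝔽) :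
    ((v 0 ⨯₃ v 1) ⨯₃ (v 3 ⨯₃ v 4)) ⬝ᵥ
      (((v 1 ⨯₃ v 2) ⨯₃ (v 4 ⨯₃ v 5)) ⨯₃ ((v 2 ⨯₃ v 3) ⨯₃ (v 5 ⨯₃ v 0)))
      = (Matrix.of fun i => ![v i 0 * v i 0, v i 1 * v i 1, v i 2 * v i 2,
          v i 0 * v i 1, v i 0 * v i 2, v i 1 * v i 2]).det := by
  rw [my_det_fin_6]
  simp only [Matrix.of_apply, Matrix.cons_val_zero, Matrix.cons_val_one, Matrix.head_cons,
    Matrix.cons_val_two, Matrix.tail_cons, cv3', cv4', cv5', cross_apply, dotProduct,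
    Fin.sum_univ_three]
  ring

end PascalAux

section PascalAux2
variable {𝔽 : Type*} [Field 𝔽]

lemma li3_iff_det {a b c : Fin 3 → 𝔽} :
    LinearIndependent 𝔽 ![a, b, c] ↔ Matrix.det (Matrix.of ![a, b, c]) ≠ 0 := by
  constructor
  · intro h
    have : IsUnit (Matrix.of ![a, b, c]) :=
      Matrix.linearIndependent_rows_iff_isUnit.mp h
    exact isUnit_iff_ne_zero.mp ((Matrix.isUnit_iff_isUnit_det _).mp this)
  · intro h
    exact Matrix.linearIndependent_rows_iff_isUnit.mpr
      ((Matrix.isUnit_iff_isUnit_det _).mpr (isUnit_iff_ne_zero.mpr h))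

lemma det_of_eq_triple (a b c : Fin 3 → 𝔽) :
    Matrix.det (Matrix.of ![a, b, c]) = a ⬝ᵥ b ⨯₃ c :=
  (triple_product_eq_det a b c).symm

lemma mem_span_iff_dot {a b : Fin 3 → 𝔽} (hab : LinearIndependent 𝔽 ![a, b])
    (x : Fin 3 → 𝔽) : x ∈ Submodule.span 𝔽 {a, b} ↔ (a ⨯₃ b) ⬝ᵥ x = 0 := by
  rw [Submodule.mem_span_pair]
  constructor
  · rintro ⟨m, n, rfl⟩
    rw [dotProduct_comm]
    simp [add_dotProduct, smul_dotProduct]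
  · intro h
    have hdet : Matrix.det (Matrix.of ![x, a, b]) = 0 := by
      rw [det_of_eq_triple, ← dotProduct_comm]
      exact h
    have hnli : ¬ LinearIndependent 𝔽 ![x, a, b] := by
      rw [li3_iff_det]
      simpa using hdet
    rw [Fintype.not_linearIndependent_iff] at hnli
    obtain ⟨g, hg, i, hi⟩ := hnli
    rw [Fin.sum_univ_three] at hg
    simp only [Matrix.cons_val_zero, Matrix.cons_val_one, Matrix.head_cons,
      Matrix.cons_val_two, Matrix.tail_cons] at hg
    by_cases hg0 : g 0 = 0
    · exfalso
      rw [Fintype.linearIndependent_iff] at hab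
      have h2 := hab ![g 1, g 2] (by
        rw [Fin.sum_univ_two]
        simpa [hg0] using hg)
      fin_cases i
      · exact hi hg0
      · exact hi (h2 0)
      · exact hi (h2 1)
    · refine ⟨-g 1 / g 0, -g 2 / g 0, ?_⟩
      funext j
      have hj := congrFun hg j
      simp only [Pi.add_apply, Pi.smul_apply, Pi.zero_apply, smul_eq_mul] at hj
      simp only [Pi.add_apply, Pi.smul_apply, smul_eq_mul]
      rw [div_mul_eq_mul_div, div_mul_eq_mul_div, ← add_div, eq_comm,
        eq_div_iff hg0]
      linear_combination hj

lemma cross_cross_eq' (u v w : Fin 3 → 𝔽) :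
    (u ⨯₃ v) ⨯₃ w = (u ⬝ᵥ w) • v - (v ⬝ᵥ w) • u := by
  ext i
  fin_cases i <;>
    · simp [cross_apply, dotProduct, Fin.sum_univ_three]
      ring

lemma li_pair_of_triple {a b c : Fin 3 → 𝔽} (h : LinearIndependent 𝔽 ![a, b, c]) :
    LinearIndependent 𝔽 ![a, b] := by
  rw [Fintype.linearIndependent_iff] at h ⊢
  intro g hg
  have h2 := h ![g 0, g 1, 0] (by
    simpa [Fin.sum_univ_three, Fin.sum_univ_two] using hg)
  intro i
  fin_cases i
  · exact h2 0
  · exact h2 1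

/-- key intersection lemma -/
lemma inter_lemma {a b c d : Fin 3 → 𝔽}
    (hab : LinearIndependent 𝔽 ![a, b]) (hcd : LinearIndependent 𝔽 ![c, d])
    (hc : (a ⨯₃ b) ⬝ᵥ c ≠ 0) :
    (a ⨯₃ b) ⨯₃ (c ⨯₃ d) ≠ 0 ∧
    ((a ⨯₃ b) ⨯₃ (c ⨯₃ d)) ∈ Submodule.span 𝔽 {a, b} ⊓ Submodule.span 𝔽 {c, d} ∧
    ∀ x ∈ Submodule.span 𝔽 {a, b} ⊓ Submodule.span 𝔽 {c, d},
      ∃ t : 𝔽, x = t • ((a ⨯₃ b) ⨯₃ (c ⨯₃ d)) := by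
  set n1 := a ⨯₃ b with hn1
  set n2 := c ⨯₃ d with hn2
  have hn1ne : n1 ≠ 0 := crossProduct_ne_zero_iff_linearIndependent.mpr hab
  have hn2ne : n2 ≠ 0 := crossProduct_ne_zero_iff_linearIndependent.mpr hcd
  have hli : LinearIndependent 𝔽 ![n1, n2] := by
    by_contra hnli
    rw [LinearIndependent.pair_iff' hn1ne, not_forall] at hnli
    obtain ⟨t, ht⟩ := hnli
    rw [not_ne_iff] at ht
    have ht0 : t ≠ 0 := by
      rintro rfl
      rw [zero_smul] at ht
      exact hn2ne ht.symm
    have h2c : n2 ⬝ᵥ c = 0 := by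
      rw [hn2, dotProduct_comm]
      exact dot_self_cross c d
    rw [← ht, smul_dotProduct] at h2c
    exact hc ((mul_eq_zero.mp h2c).resolve_left ht0)
  have hwne : n1 ⨯₃ n2 ≠ 0 := crossProduct_ne_zero_iff_linearIndependent.mpr hli
  refine ⟨hwne, ?_, ?_⟩
  · rw [Submodule.mem_inf, mem_span_iff_dot hab, mem_span_iff_dot hcd]
    exact ⟨dot_self_cross n1 n2, dot_cross_self n1 n2⟩
  · intro x hx
    rw [Submodule.mem_inf, mem_span_iff_dot hab, mem_span_iff_dot hcd] at hx
    have hzero : (n1 ⨯₃ n2) ⨯₃ x = 0 := by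
      rw [cross_cross_eq', hx.1, hx.2, zero_smul, zero_smul, sub_zero]
    by_contra hcon
    rw [not_exists] at hcon
    have : LinearIndependent 𝔽 ![n1 ⨯₃ n2, x] := by
      rw [LinearIndependent.pair_iff' hwne]
      intro t ht
      exact hcon t ht.symm
    rw [← crossProduct_ne_zero_iff_linearIndependent] at this
    exact this hzero

private lemma cv3 {α : Type*} (a b c d e f : α) : ![a,b,c,d,e,f] (3 : Fin 6) = d := rfl
private lemma cv4 {α : Type*} (a b c d e f : α) : ![a,b,c,d,e,f] (4 : Fin 6) = e := rfl
private lemma cv5 {α : Type*} (a b c d e f : α) : ![a,b,c,d,e,f] (5 : Fin 6) = f := rfl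

lemma quad_eval (Q : QuadraticForm 𝔽 (Fin 3 → 𝔽)) (x : Fin 3 → 𝔽) :
    Q x = x 0 * x 0 * Q ![1,0,0] + x 1 * x 1 * Q ![0,1,0] + x 2 * x 2 * Q ![0,0,1]
      + x 0 * x 1 * polar Q ![1,0,0] ![0,1,0] + x 0 * x 2 * polar Q ![1,0,0] ![0,0,1]
      + x 1 * x 2 * polar Q ![0,1,0] ![0,0,1] := by
  have hx : x = x 0 • ![1,0,0] + (x 1 • ![0,1,0] + x 2 • ![0,0,1]) := by
    funext i; fin_cases i <;> simp
  nth_rewrite 1 [hx]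
  rw [QuadraticMap.map_add (Q : (Fin 3 → 𝔽) → 𝔽), QuadraticMap.map_add (Q : (Fin 3 → 𝔽) → 𝔽)]
  simp only [QuadraticMap.map_smul, polar_smul_left, polar_smul_right, polar_add_right,
    smul_eq_mul]
  ring

lemma quad_iff_mulvec (v : Fin 6 → Fin 3 → 𝔽) :
    (∃ Q : QuadraticForm 𝔽 (Fin 3 → 𝔽), Q ≠ 0 ∧ ∀ i, Q (v i) = 0) ↔
    (∃ q : Fin 6 → 𝔽, q ≠ 0 ∧
      (Matrix.of fun i => ![v i 0 * v i 0, v i 1 * v i 1, v i 2 * v i 2,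
        v i 0 * v i 1, v i 0 * v i 2, v i 1 * v i 2]).mulVec q = 0) := by
  constructor
  · rintro ⟨Q, hQ, hQv⟩
    refine ⟨![Q ![1,0,0], Q ![0,1,0], Q ![0,0,1], polar Q ![1,0,0] ![0,1,0],
      polar Q ![1,0,0] ![0,0,1], polar Q ![0,1,0] ![0,0,1]], ?_, ?_⟩
    · intro h
      simp only [Matrix.cons_eq_zero_iff] at h
      obtain ⟨e0, e1, e2, e3, e4, e5, -⟩ := h
      apply hQ
      ext x
      rw [quad_eval Q x, e0, e1, e2, e3, e4, e5]
      simp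
    · funext i
      have key : ∀ w : Fin 6 → 𝔽, ((Matrix.of fun i => ![v i 0 * v i 0, v i 1 * v i 1,
          v i 2 * v i 2, v i 0 * v i 1, v i 0 * v i 2, v i 1 * v i 2]).mulVec w) i
          = v i 0 * v i 0 * w 0 + v i 1 * v i 1 * w 1 + v i 2 * v i 2 * w 2
            + v i 0 * v i 1 * w 3 + v i 0 * v i 2 * w 4 + v i 1 * v i 2 * w 5 := by
        intro w
        simp [Matrix.mulVec, dotProduct, Fin.sum_univ_six, cv3, cv4, cv5]
      rw [Pi.zero_apply, key]
      have hev := hQv i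
      rw [quad_eval Q (v i)] at hev
      simp only [Matrix.cons_val_zero, Matrix.cons_val_one, Matrix.head_cons,
        Matrix.cons_val_two, Matrix.tail_cons, cv3, cv4, cv5]
      linear_combination hev
  · rintro ⟨q, hq, hMq⟩
    set A : Matrix (Fin 3) (Fin 3) 𝔽 := !![q 0, q 3, q 4; 0, q 1, q 5; 0, 0, q 2] with hA
    set Q : QuadraticForm 𝔽 (Fin 3 → 𝔽) := (Matrix.toBilin' A).toQuadraticMap with hQdef
    have hQval : ∀ x : Fin 3 → 𝔽, Q x = q 0 * (x 0 * x 0) + q 1 * (x 1 * x 1)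
        + q 2 * (x 2 * x 2) + q 3 * (x 0 * x 1) + q 4 * (x 0 * x 2) + q 5 * (x 1 * x 2) := by
      intro x
      rw [hQdef]
      rw [LinearMap.BilinMap.toQuadraticMap_apply, Matrix.toBilin'_apply']
      simp only [Matrix.mulVec, dotProduct, Fin.sum_univ_three, hA, Matrix.cons_val_zero,
        Matrix.cons_val_one, Matrix.head_cons, Matrix.cons_val_two, Matrix.tail_cons,
        Matrix.of_apply, Matrix.cons_val', Matrix.empty_val', Matrix.cons_val_fin_one,
        Matrix.head_fin_const]
      ring
    refine ⟨Q, ?_, ?_⟩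
    · intro h
      have hz : ∀ x : Fin 3 → 𝔽, Q x = 0 := by
        intro x; rw [h]; rfl
      apply hq
      have h0 := (hQval ![1,0,0]).symm.trans (hz _)
      have h1 := (hQval ![0,1,0]).symm.trans (hz _)
      have h2 := (hQval ![0,0,1]).symm.trans (hz _)
      have h3 := (hQval ![1,1,0]).symm.trans (hz _)
      have h4 := (hQval ![1,0,1]).symm.trans (hz _)
      have h5 := (hQval ![0,1,1]).symm.trans (hz _)
      simp only [Matrix.cons_val_zero, Matrix.cons_val_one, Matrix.head_cons,
        Matrix.cons_val_two, Matrix.tail_cons, mul_one, mul_zero, zero_mul, one_mul,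
        add_zero, zero_add] at h0 h1 h2 h3 h4 h5
      have hq3 : q 3 = 0 := by linear_combination h3 - h0 - h1
      have hq4 : q 4 = 0 := by linear_combination h4 - h0 - h2
      have hq5 : q 5 = 0 := by linear_combination h5 - h1 - h2
      funext j
      fin_cases j
      · simpa using h0
      · simpa using h1
      · simpa using h2
      · simpa using hq3
      · simpa using hq4
      · simpa using hq5
    · intro i
      have hi := congrFun hMq i
      simp only [Matrix.mulVec, dotProduct, Fin.sum_univ_six, Matrix.of_apply,
        Matrix.cons_val_zero, Matrix.cons_val_one, Matrix.head_cons, Pi.zero_apply,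
        Matrix.cons_val_two, Matrix.tail_cons, cv3, cv4, cv5] at hi
      rw [hQval (v i)]
      linear_combination hi

lemma lin_vanish_zero {a b c : Fin 3 → 𝔽} (hli : LinearIndependent 𝔽 ![a, b, c])
    (f : (Fin 3 → 𝔽) →ₗ[𝔽] 𝔽) (ha : f a = 0) (hb : f b = 0) (hc : f c = 0) : f = 0 := by
  have hcard : Fintype.card (Fin 3) = Module.finrank 𝔽 (Fin 3 → 𝔽) := by simp
  let B := basisOfLinearIndependentOfCardEqFinrank hli hcard
  apply B.ext
  intro l
  have hB : ⇑B = ![a, b, c] := coe_basisOfLinearIndependentOfCardEqFinrank hli hcard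
  rw [hB]
  fin_cases l <;> simp [ha, hb, hc]

lemma not_prod_of_vanish (v : Fin 6 → Fin 3 → 𝔽)
    (harc : ∀ i j k : Fin 6, i ≠ j → j ≠ k → i ≠ k →
      LinearIndependent 𝔽 ![v i, v j, v k])
    (Q : QuadraticForm 𝔽 (Fin 3 → 𝔽)) (hQ : Q ≠ 0) (hQv : ∀ i, Q (v i) = 0) :
    ¬∃ f g : (Fin 3 → 𝔽) →ₗ[𝔽] 𝔽, ∀ x, Q x = f x * g x := by
  classical
  rintro ⟨f, g, hfg⟩
  have hzero : ∀ (h : (Fin 3 → 𝔽) →ₗ[𝔽] 𝔽), (∃ i j k : Fin 6, i ≠ j ∧ j ≠ k ∧ i ≠ k ∧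
      h (v i) = 0 ∧ h (v j) = 0 ∧ h (v k) = 0) → False ∨ h = 0 := by
    rintro h ⟨i, j, k, hij, hjk, hik, hi, hj, hk⟩
    exact Or.inr (lin_vanish_zero (harc i j k hij hjk hik) h hi hj hk)
  have hsplit := Finset.card_filter_add_card_filter_not
    (s := (Finset.univ : Finset (Fin 6))) (p := fun i => f (v i) = 0)
  have hcard6 : (Finset.univ : Finset (Fin 6)).card = 6 := by simp
  have hmain : f = 0 ∨ g = 0 := by
    rcases lt_or_ge 2 ((Finset.univ : Finset (Fin 6)).filter (fun i => f (v i) = 0)).card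
      with hS | hS
    · obtain ⟨i, j, k, hi, hj, hk, hij, hik, hjk⟩ := Finset.two_lt_card_iff.mp hS
      simp only [Finset.mem_filter] at hi hj hk
      exact Or.inl (lin_vanish_zero (harc i j k hij hjk hik) f hi.2 hj.2 hk.2)
    · have hS' : 2 < ((Finset.univ : Finset (Fin 6)).filter (fun i => ¬ f (v i) = 0)).card := by
        omega
      obtain ⟨i, j, k, hi, hj, hk, hij, hik, hjk⟩ := Finset.two_lt_card_iff.mp hS'
      simp only [Finset.mem_filter] at hi hj hk
      refine Or.inr (lin_vanish_zero (harc i j k hij hjk hik) g ?_ ?_ ?_)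
      · have := hQv i; rw [hfg] at this
        exact (mul_eq_zero.mp this).resolve_left hi.2
      · have := hQv j; rw [hfg] at this
        exact (mul_eq_zero.mp this).resolve_left hj.2
      · have := hQv k; rw [hfg] at this
        exact (mul_eq_zero.mp this).resolve_left hk.2
  apply hQ
  ext x
  rcases hmain with h | h <;>
    simp [hfg x, h]

end PascalAux2

theorem pascal_iff_conic {𝔽 : Type*} [Field 𝔽]
    (v : Fin 6 → (Fin 3 → 𝔽)) (hv0 : ∀ i, v i ≠ 0)
    (harc : ∀ i j k : Fin 6, i ≠ j → j ≠ k → i ≠ k →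
      LinearIndependent 𝔽 ![v i, v j, v k]) :
    (∃ x y z : Fin 3 → 𝔽, x ≠ 0 ∧ y ≠ 0 ∧ z ≠ 0 ∧
        x ∈ Submodule.span 𝔽 {v 0, v 1} ⊓ Submodule.span 𝔽 {v 3, v 4} ∧
        y ∈ Submodule.span 𝔽 {v 1, v 2} ⊓ Submodule.span 𝔽 {v 4, v 5} ∧
        z ∈ Submodule.span 𝔽 {v 2, v 3} ⊓ Submodule.span 𝔽 {v 5, v 0} ∧
        ¬LinearIndependent 𝔽 ![x, y, z]) ↔
      (∃ Q : QuadraticForm 𝔽 (Fin 3 → 𝔽), Q ≠ 0 ∧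
        (¬∃ f g : (Fin 3 → 𝔽) →ₗ[𝔽] 𝔽, ∀ x, Q x = f x * g x) ∧
        ∀ i, Q (v i) = 0) := by
  have hpair : ∀ i j k : Fin 6, i ≠ j → j ≠ k → i ≠ k →
      LinearIndependent 𝔽 ![v i, v j] := fun i j k hij hjk hik =>
    li_pair_of_triple (harc i j k hij hjk hik)
  have hdot : ∀ i j k : Fin 6, i ≠ j → j ≠ k → i ≠ k →
      (v i ⨯₃ v j) ⬝ᵥ v k ≠ 0 := by
    intro i j k hij hjk hik
    have h := li3_iff_det.mp (harc k i j (Ne.symm hik) hij (Ne.symm hjk))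
    rw [det_of_eq_triple] at h
    rw [dotProduct_comm]
    exact h
  have I1 := inter_lemma (𝔽 := 𝔽) (hpair 0 1 2 (by decide) (by decide) (by decide))
    (hpair 3 4 5 (by decide) (by decide) (by decide))
    (hdot 0 1 3 (by decide) (by decide) (by decide))
  have I2 := inter_lemma (𝔽 := 𝔽) (hpair 1 2 3 (by decide) (by decide) (by decide))
    (hpair 4 5 0 (by decide) (by decide) (by decide))
    (hdot 1 2 4 (by decide) (by decide) (by decide))
  have I3 := inter_lemma (𝔽 := 𝔽) (hpair 2 3 4 (by decide) (by decide) (by decide))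
    (hpair 5 0 1 (by decide) (by decide) (by decide))
    (hdot 2 3 5 (by decide) (by decide) (by decide))
  set x₀ := (v 0 ⨯₃ v 1) ⨯₃ (v 3 ⨯₃ v 4) with hx₀
  set y₀ := (v 1 ⨯₃ v 2) ⨯₃ (v 4 ⨯₃ v 5) with hy₀
  set z₀ := (v 2 ⨯₃ v 3) ⨯₃ (v 5 ⨯₃ v 0) with hz₀
  have key : (x₀ ⬝ᵥ y₀ ⨯₃ z₀ = 0) ↔
      (∃ Q : QuadraticForm 𝔽 (Fin 3 → 𝔽), Q ≠ 0 ∧ ∀ i, Q (v i) = 0) := by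
    rw [hx₀, hy₀, hz₀, core_identity, ← Matrix.exists_mulVec_eq_zero_iff,
      quad_iff_mulvec]
  constructor
  · rintro ⟨x, y, z, hxne, hyne, hzne, hx, hy, hz, hnli⟩
    obtain ⟨tx, rfl⟩ := I1.2.2 x hx
    obtain ⟨ty, rfl⟩ := I2.2.2 y hy
    obtain ⟨tz, rfl⟩ := I3.2.2 z hz
    have htx : tx ≠ 0 := fun h => hxne (by rw [h, zero_smul])
    have hty : ty ≠ 0 := fun h => hyne (by rw [h, zero_smul])
    have htz : tz ≠ 0 := fun h => hzne (by rw [h, zero_smul])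
    have hdet : (Matrix.of ![tx • x₀, ty • y₀, tz • z₀]).det = 0 := by
      rw [← not_ne_iff]
      exact fun h => hnli (li3_iff_det.mpr h)
    rw [det_of_eq_triple] at hdet
    have hT : x₀ ⬝ᵥ y₀ ⨯₃ z₀ = 0 := by
      have hexp : (tx • x₀) ⬝ᵥ (ty • y₀) ⨯₃ (tz • z₀)
          = (tx * ty * tz) * (x₀ ⬝ᵥ y₀ ⨯₃ z₀) := by
        simp only [LinearMap.map_smul₂, LinearMap.map_smul, LinearMap.smul_apply,
          smul_dotProduct, dotProduct_smul, smul_eq_mul]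
        ring
      rw [hexp] at hdet
      rcases mul_eq_zero.mp hdet with h | h
      · exact absurd h (by simp [htx, hty, htz])
      · exact h
    obtain ⟨Q, hQ, hQv⟩ := key.mp hT
    exact ⟨Q, hQ, not_prod_of_vanish v harc Q hQ hQv, hQv⟩
  · rintro ⟨Q, hQ, -, hQv⟩
    have hT := key.mpr ⟨Q, hQ, hQv⟩
    refine ⟨x₀, y₀, z₀, I1.1, I2.1, I3.1, I1.2.1, I2.2.1, I3.2.1, ?_⟩
    intro hli
    apply li3_iff_det.mp hli
    rw [det_of_eq_triple]
    exact hT
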